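/- arXiv:2604.02469 — 4 statements merged into one kernel-verified Lean document; each statement's English description precedes it below -/
import Mathlib

section
/- Let q be a prime power, let A ∈ 𝔽_q[T] be a monic polynomial, let 𝒮 be an arbitrary subset of the set of primes in 𝔽_q[T], and let f : ℕ → ℂ be a function with f(0) = 0. Then for every positive integer k, the sum over monic divisors B of A with B ∈ 𝒟(𝒮) of μ(B)·C(Ω(B)−1, k−1)·f(δ₁(B)) equals (−1)^k · Q_𝒮^{(k)}(A) · f(Δ_k(A)). -/
open Filter Topology Polynomial Asymptotics
open scoped Classical

variable {F : Type} [Field F] [Fintype F]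

/-- The Möbius function for (monic) polynomials over a finite field:
`μ(A) = 1` if `A = 1`, `(-1)^k` if `A` is a product of `k` distinct primes, `0` otherwise. -/
noncomputable def muFF (A : Polynomial F) : ℤ :=
  if Squarefree A then
    (-1) ^ (UniqueFactorizationMonoid.normalizedFactors A).toFinset.card
  else 0

/-- `𝒩(A)`: the set of degrees of prime (monic irreducible) divisors of `A`. -/
noncomputable def NSet (A : Polynomial F) : Finset ℕ :=
  (Finset.range (A.natDegree + 1)).filter fun d =>
    ∃ P : Polynomial F, P.Monic ∧ Irreducible P ∧ P ∣ A ∧ P.natDegree = d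

/-- `Ω(A)`: the number of distinct degrees of prime divisors of `A`. -/
noncomputable def OmegaFF (A : Polynomial F) : ℕ := (NSet A).card

/-- `δ_k(A)`: the `k`-th smallest element of `𝒩(A)` (and `0` if `k > Ω(A)`). -/
noncomputable def deltaSmall (k : ℕ) (A : Polynomial F) : ℕ :=
  ((NSet A).sort (· ≤ ·)).getD (k - 1) 0

/-- `Δ_k(A)`: the `k`-th largest element of `𝒩(A)` (and `0` if `k > Ω(A)`). -/
noncomputable def DeltaLarge (k : ℕ) (A : Polynomial F) : ℕ :=
  (((NSet A).sort (· ≤ ·)).reverse).getD (k - 1) 0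

/-- `P_min(A)`: the set of prime divisors of `A` of minimal degree `δ₁(A)`. -/
noncomputable def Pmin (A : Polynomial F) : Set (Polynomial F) :=
  {P | P.Monic ∧ Irreducible P ∧ P ∣ A ∧ P.natDegree = deltaSmall 1 A}

/-- `𝒟(𝒮)`: monic polynomials whose set of minimal-degree prime divisors is a
singleton `{P}` with `P ∈ 𝒮`. -/
noncomputable def DSet (S : Set (Polynomial F)) : Set (Polynomial F) :=
  {A | A.Monic ∧ ∃ P ∈ S, Pmin A = {P}}

/-- `Q_𝒮^{(k)}(A) = #{P ∈ 𝒮 : P ∣ A, deg P = Δ_k(A)}`. -/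
noncomputable def QS (S : Set (Polynomial F)) (k : ℕ) (A : Polynomial F) : ℕ :=
  {P | P ∈ S ∧ P ∣ A ∧ P.natDegree = DeltaLarge k A}.ncard


set_option linter.unusedSectionVars false


open UniqueFactorizationMonoid in
lemma mem_normFactors_iff {A P : Polynomial F} (hA : A ≠ 0) :
    P ∈ (normalizedFactors A).toFinset ↔ P.Monic ∧ Irreducible P ∧ P ∣ A := by
  rw [Multiset.mem_toFinset]
  constructor
  · intro h
    have hP := irreducible_of_normalized_factor P h
    have hn : normalize P = P := normalize_normalized_factor P h
    refine ⟨?_, hP, dvd_of_mem_normalizedFactors h⟩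
    rw [← hn]; exact Polynomial.monic_normalize hP.ne_zero
  · rintro ⟨hm, hi, hd⟩
    obtain ⟨q, hq, hassoc⟩ := exists_mem_normalizedFactors_of_dvd hA hi hd
    have hqm : q.Monic := by
      have hn := normalize_normalized_factor q hq
      rw [← hn]
      exact Polynomial.monic_normalize (irreducible_of_normalized_factor q hq).ne_zero
    rwa [Polynomial.eq_of_monic_of_associated hm hqm hassoc]

open UniqueFactorizationMonoid in
lemma normFactors_prod {s : Finset (Polynomial F)}
    (h : ∀ P ∈ s, P.Monic ∧ Irreducible P) :
    normalizedFactors (∏ P ∈ s, P) = s.val := by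
  induction s using Finset.cons_induction with
  | empty => simp [normalizedFactors_one]
  | cons P s hPs ih =>
    rw [Finset.prod_cons]
    have hP := h P (Finset.mem_cons_self P s)
    have hs : ∀ Q ∈ s, Q.Monic ∧ Irreducible Q := fun Q hQ => h Q (Finset.mem_cons_of_mem hQ)
    have hprod : (∏ Q ∈ s, Q) ≠ 0 :=
      (Polynomial.monic_prod_of_monic _ _ fun Q hQ => (hs Q hQ).1).ne_zero
    rw [normalizedFactors_mul hP.1.ne_zero hprod, ih hs,
      normalizedFactors_irreducible hP.2, hP.1.normalize_eq_self]
    simp [Finset.cons_val, Multiset.singleton_add, Multiset.ndinsert_of_notMem (show P ∉ s.val from hPs)]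

lemma NSet_eq {B : Polynomial F} (hB : B ≠ 0) :
    NSet B = ((UniqueFactorizationMonoid.normalizedFactors B).toFinset).image Polynomial.natDegree := by
  ext d
  simp only [NSet, Finset.mem_filter, Finset.mem_range, Finset.mem_image]
  constructor
  · rintro ⟨-, P, hm, hi, hd, rfl⟩
    exact ⟨P, (mem_normFactors_iff hB).2 ⟨hm, hi, hd⟩, rfl⟩
  · rintro ⟨P, hP, rfl⟩
    obtain ⟨hm, hi, hd⟩ := (mem_normFactors_iff hB).1 hP
    exact ⟨Nat.lt_succ_of_le (Polynomial.natDegree_le_of_dvd hd hB), P, hm, hi, hd, rfl⟩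

lemma deltaSmall_one_eq_min' {B : Polynomial F} (h : (NSet B).Nonempty) :
    deltaSmall 1 B = (NSet B).min' h := by
  have hl : 0 < ((NSet B).sort (· ≤ ·)).length := by
    rw [Finset.length_sort]; exact Finset.card_pos.2 h
  rw [deltaSmall, List.getD_eq_getElem?_getD, List.getElem?_eq_getElem (by simpa using hl)]
  simpa using Finset.sorted_zero_eq_min' (h := hl)

lemma filter_gt_card (s : Finset ℕ) (i : Fin s.card) :
    (s.filter (fun x => s.orderEmbOfFin rfl i < x)).card = s.card - 1 - i := by
  have himg : s.filter (fun x => s.orderEmbOfFin rfl i < x)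
      = (Finset.Ioi i).image (s.orderEmbOfFin rfl) := by
    ext x
    simp only [Finset.mem_filter, Finset.mem_image, Finset.mem_Ioi]
    constructor
    · rintro ⟨hx, hlt⟩
      have hx' : x ∈ Set.range (s.orderEmbOfFin rfl) := by
        rw [Finset.range_orderEmbOfFin]; exact hx
      obtain ⟨j, rfl⟩ := hx'
      exact ⟨j, (OrderEmbedding.lt_iff_lt _).1 hlt, rfl⟩
    · rintro ⟨j, hij, rfl⟩
      exact ⟨Finset.orderEmbOfFin_mem _ _ _, (OrderEmbedding.lt_iff_lt _).2 hij⟩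
  rw [himg, Finset.card_image_of_injective _ (s.orderEmbOfFin rfl).injective, Fin.card_Ioi]

lemma DeltaLarge_eq {A : Polynomial F} {k : ℕ} (hk : 0 < k) (hkn : k ≤ (NSet A).card) :
    DeltaLarge k A = (NSet A).orderEmbOfFin rfl ⟨(NSet A).card - k, by omega⟩ := by
  have hlen : ((NSet A).sort (· ≤ ·)).length = (NSet A).card := Finset.length_sort _
  have h1 : k - 1 < ((NSet A).sort (· ≤ ·)).reverse.length := by
    rw [List.length_reverse, hlen]; omega
  rw [DeltaLarge, List.getD_eq_getElem?_getD, List.getElem?_eq_getElem h1]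
  simp only [Option.getD_some]
  rw [List.getElem_reverse, Finset.orderEmbOfFin_apply]
  have hidx : ((NSet A).sort (· ≤ ·)).length - 1 - (k - 1) = (NSet A).card - k := by
    rw [hlen]; omega
  simp only [hidx]
  rfl

lemma DeltaLarge_eq_zero {A : Polynomial F} {k : ℕ} (hkn : (NSet A).card < k) :
    DeltaLarge k A = 0 := by
  rw [DeltaLarge, List.getD_eq_getElem?_getD, List.getElem?_eq_none]
  · rfl
  · rw [List.length_reverse, Finset.length_sort]; omega

lemma count_eq_iff {A : Polynomial F} {k : ℕ} (hk : 0 < k) (hkn : k ≤ (NSet A).card)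
    {d : ℕ} (hd : d ∈ NSet A) :
    ((NSet A).filter (fun x => d < x)).card = k - 1 ↔ d = DeltaLarge k A := by
  have hd' : d ∈ Set.range ((NSet A).orderEmbOfFin rfl) := by
    rw [Finset.range_orderEmbOfFin]; exact hd
  obtain ⟨i, rfl⟩ := hd'
  rw [filter_gt_card, DeltaLarge_eq hk hkn,
    ((NSet A).orderEmbOfFin rfl).injective.eq_iff]
  simp only [Fin.ext_iff, Fin.val_mk]
  have := i.isLt
  omega

lemma sum_powerset_neg_one_pow_card_complex {α : Type*} (u : Finset α) :
    ∑ t ∈ u.powerset, (-1 : ℂ) ^ t.card = if u = ∅ then 1 else 0 := by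
  classical
  have h := Finset.sum_powerset_neg_one_pow_card (x := u)
  have : ((∑ t ∈ u.powerset, (-1 : ℤ) ^ t.card : ℤ) : ℂ)
      = ∑ t ∈ u.powerset, (-1 : ℂ) ^ t.card := by push_cast; rfl
  rw [← this, h]
  split <;> simp

lemma dual_inner_sum {α : Type*} (u : Finset α) (w : α → ℕ) (D : Finset ℕ) (hD : D ⊆ u.image w) :
    ∑ t ∈ u.powerset, (-1 : ℂ) ^ t.card * (if D ⊆ t.image w then 1 else 0)
      = if D = u.image w then (-1 : ℂ) ^ D.card else 0 := by
  classical
  have step1 : ∀ t ∈ u.powerset, (if D ⊆ t.image w then (1 : ℂ) else 0)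
      = ∑ E ∈ D.powerset, (-1 : ℂ) ^ E.card *
          (if t ⊆ u.filter (fun x => w x ∉ E) then 1 else 0) := by
    intro t ht
    rw [Finset.mem_powerset] at ht
    have expand : (if D ⊆ t.image w then (1 : ℂ) else 0)
        = ∏ d ∈ D, ((-(if (∀ x ∈ t, w x ≠ d) then (1:ℂ) else 0)) + 1) := by
      have : ∀ d, ((-(if (∀ x ∈ t, w x ≠ d) then (1:ℂ) else 0)) + 1)
          = (if (∃ x ∈ t, w x = d) then (1:ℂ) else 0) := by
        intro d
        by_cases h : ∃ x ∈ t, w x = d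
        · rw [if_pos h, if_neg (by push_neg; exact h), neg_zero, zero_add]
        · rw [if_neg h, if_pos (by push_neg at h; exact h)]; ring
      simp only [this, Finset.prod_boole]
      congr 1
      simp only [eq_iff_iff]
      constructor
      · intro hsub d hd
        obtain ⟨x, hx, hxd⟩ := Finset.mem_image.1 (hsub hd)
        exact ⟨x, hx, hxd⟩
      · intro hall d hd
        obtain ⟨x, hx, hxd⟩ := hall d hd
        exact Finset.mem_image.2 ⟨x, hx, hxd⟩
    rw [expand, Finset.prod_add]
    refine Finset.sum_congr rfl fun E hE => ?_
    rw [Finset.prod_const_one, mul_one]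
    have : ∏ d ∈ E, (-(if (∀ x ∈ t, w x ≠ d) then (1:ℂ) else 0))
        = (-1 : ℂ) ^ E.card * ∏ d ∈ E, (if (∀ x ∈ t, w x ≠ d) then (1:ℂ) else 0) := by
      rw [← Finset.prod_const, ← Finset.prod_mul_distrib]
      exact Finset.prod_congr rfl fun d _ => by ring
    rw [this, Finset.prod_boole]
    congr 2
    simp only [eq_iff_iff]
    constructor
    · intro hall x hx
      exact Finset.mem_filter.2 ⟨ht hx, fun hwE => hall _ hwE x hx rfl⟩
    · intro hsub d hdE x hx hxd
      exact (Finset.mem_filter.1 (hsub hx)).2 (hxd ▸ hdE)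
  calc ∑ t ∈ u.powerset, (-1 : ℂ) ^ t.card * (if D ⊆ t.image w then 1 else 0)
      = ∑ t ∈ u.powerset, ∑ E ∈ D.powerset, (-1 : ℂ) ^ t.card * ((-1 : ℂ) ^ E.card *
          (if t ⊆ u.filter (fun x => w x ∉ E) then 1 else 0)) := by
        refine Finset.sum_congr rfl fun t ht => ?_
        rw [← Finset.mul_sum, step1 t ht]
    _ = ∑ E ∈ D.powerset, (-1 : ℂ) ^ E.card *
          ∑ t ∈ u.powerset, (-1 : ℂ) ^ t.card *
            (if t ⊆ u.filter (fun x => w x ∉ E) then 1 else 0) := by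
        rw [Finset.sum_comm]
        refine Finset.sum_congr rfl fun E _ => ?_
        rw [Finset.mul_sum]
        exact Finset.sum_congr rfl fun t _ => by ring
    _ = ∑ E ∈ D.powerset, (-1 : ℂ) ^ E.card *
          (if u.filter (fun x => w x ∉ E) = ∅ then 1 else 0) := by
        refine Finset.sum_congr rfl fun E _ => ?_
        congr 1
        have hsub : u.filter (fun x => w x ∉ E) ⊆ u := Finset.filter_subset _ _
        have : ∑ t ∈ u.powerset, (-1 : ℂ) ^ t.card *
              (if t ⊆ u.filter (fun x => w x ∉ E) then 1 else 0)
            = ∑ t ∈ (u.filter (fun x => w x ∉ E)).powerset, (-1 : ℂ) ^ t.card := by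
          simp only [mul_ite, mul_one, mul_zero]
          rw [← Finset.sum_filter]
          congr 1
          ext t
          simp only [Finset.mem_filter, Finset.mem_powerset]
          exact ⟨fun h => h.2, fun h => ⟨h.trans hsub, h⟩⟩
        rw [this, sum_powerset_neg_one_pow_card_complex]
    _ = ∑ E ∈ D.powerset, (if E = u.image w then (-1 : ℂ) ^ E.card else 0) := by
        refine Finset.sum_congr rfl fun E hE => ?_
        rw [Finset.mem_powerset] at hE
        have hiff : u.filter (fun x => w x ∉ E) = ∅ ↔ E = u.image w := by
          rw [Finset.filter_eq_empty_iff]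
          constructor
          · intro h
            refine Finset.Subset.antisymm (hE.trans hD) fun d hd => ?_
            obtain ⟨x, hx, rfl⟩ := Finset.mem_image.1 hd
            by_contra hne
            exact h hx hne
          · rintro rfl x hx hne
            exact hne (Finset.mem_image.2 ⟨x, hx, rfl⟩)
        by_cases h : E = u.image w
        · rw [if_pos (hiff.2 h), if_pos h, mul_one]
        · rw [if_neg (fun he => h (hiff.1 he)), if_neg h, mul_zero]
    _ = if D = u.image w then (-1 : ℂ) ^ D.card else 0 := by
        rw [Finset.sum_ite_eq' D.powerset (u.image w) (fun E => (-1 : ℂ) ^ E.card)]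
        by_cases h : D = u.image w
        · rw [if_pos (Finset.mem_powerset.2 (le_of_eq h.symm)), if_pos h, ← h]
        · rw [if_neg (fun hmem => ?_), if_neg h]
          exact h (Finset.Subset.antisymm hD (Finset.mem_powerset.1 hmem))

lemma comb_sum {α : Type*} (u : Finset α) (w : α → ℕ) (m : ℕ) :
    ∑ t ∈ u.powerset, (-1 : ℂ) ^ t.card * ((t.image w).card.choose m : ℂ)
      = (-1 : ℂ) ^ m * (if (u.image w).card = m then 1 else 0) := by
  classical
  have step1 : ∀ t ∈ u.powerset, ((t.image w).card.choose m : ℂ)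
      = ∑ D ∈ (u.image w).powersetCard m, (if D ⊆ t.image w then (1:ℂ) else 0) := by
    intro t ht
    rw [Finset.mem_powerset] at ht
    have heq : ((u.image w).powersetCard m).filter (fun D => D ⊆ t.image w)
        = (t.image w).powersetCard m := by
      ext D
      simp only [Finset.mem_filter, Finset.mem_powersetCard]
      exact ⟨fun h => ⟨h.2, h.1.2⟩, fun h => ⟨⟨h.1.trans (Finset.image_subset_image ht), h.2⟩, h.1⟩⟩
    rw [← Finset.sum_filter, heq, Finset.sum_const, nsmul_eq_mul, mul_one,
      Finset.card_powersetCard]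
  calc ∑ t ∈ u.powerset, (-1 : ℂ) ^ t.card * ((t.image w).card.choose m : ℂ)
      = ∑ D ∈ (u.image w).powersetCard m, ∑ t ∈ u.powerset,
          (-1 : ℂ) ^ t.card * (if D ⊆ t.image w then 1 else 0) := by
        rw [Finset.sum_comm]
        refine Finset.sum_congr rfl fun t ht => ?_
        rw [← Finset.mul_sum, step1 t ht]
    _ = ∑ D ∈ (u.image w).powersetCard m,
          (if D = u.image w then (-1 : ℂ) ^ D.card else 0) := by
        refine Finset.sum_congr rfl fun D hD => ?_
        exact dual_inner_sum u w D (Finset.mem_powersetCard.1 hD).1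
    _ = (-1 : ℂ) ^ m * (if (u.image w).card = m then 1 else 0) := by
        rw [Finset.sum_ite_eq' _ (u.image w) (fun D => (-1 : ℂ) ^ D.card)]
        by_cases h : (u.image w).card = m
        · rw [if_pos (Finset.mem_powersetCard.2 ⟨Finset.Subset.refl _, h⟩), if_pos h, h, mul_one]
        · rw [if_neg (fun hmem => h (Finset.mem_powersetCard.1 hmem).2), if_neg h, mul_zero]

open UniqueFactorizationMonoid in
lemma pf_of_prod {s : Finset (Polynomial F)} (h : ∀ P ∈ s, P.Monic ∧ Irreducible P) :
    (normalizedFactors (∏ P ∈ s, P)).toFinset = s := by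
  rw [normFactors_prod h, Finset.val_toFinset]

open UniqueFactorizationMonoid in
lemma squarefree_prod_primes {s : Finset (Polynomial F)}
    (h : ∀ P ∈ s, P.Monic ∧ Irreducible P) : Squarefree (∏ P ∈ s, P) := by
  have hne : (∏ P ∈ s, P) ≠ 0 :=
    (Polynomial.monic_prod_of_monic _ _ fun Q hQ => (h Q hQ).1).ne_zero
  rw [squarefree_iff_nodup_normalizedFactors hne, normFactors_prod h]
  exact s.nodup

lemma muFF_prod {s : Finset (Polynomial F)} (h : ∀ P ∈ s, P.Monic ∧ Irreducible P) :
    muFF (∏ P ∈ s, P) = (-1) ^ s.card := by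
  rw [muFF, if_pos (squarefree_prod_primes h), pf_of_prod h]

open UniqueFactorizationMonoid in
lemma prod_primes_dvd {A : Polynomial F} (hA : A ≠ 0) {s : Finset (Polynomial F)}
    (h : ∀ P ∈ s, P.Monic ∧ Irreducible P)
    (hsub : ∀ P ∈ s, P ∈ (normalizedFactors A).toFinset) :
    (∏ P ∈ s, P) ∣ A := by
  have hne : (∏ P ∈ s, P) ≠ 0 :=
    (Polynomial.monic_prod_of_monic _ _ fun Q hQ => (h Q hQ).1).ne_zero
  rw [dvd_iff_normalizedFactors_le_normalizedFactors hne hA, normFactors_prod h]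
  rw [Multiset.le_iff_subset s.nodup]
  intro x hx
  exact Multiset.mem_toFinset.1 (hsub x hx)

open UniqueFactorizationMonoid in
lemma prod_eq_of_squarefree {B : Polynomial F} (hB : B.Monic) (hsq : Squarefree B) :
    B = ∏ P ∈ (normalizedFactors B).toFinset, P := by
  have hB0 : B ≠ 0 := hB.ne_zero
  have hnodup : (normalizedFactors B).Nodup :=
    (squarefree_iff_nodup_normalizedFactors hB0).1 hsq
  have hval : ((normalizedFactors B).toFinset).val = normalizedFactors B := by
    rw [Multiset.toFinset_val, Multiset.dedup_eq_self.2 hnodup]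
  have hassoc : Associated ((normalizedFactors B).prod) B := prod_normalizedFactors hB0
  have hmono : (∏ P ∈ (normalizedFactors B).toFinset, P).Monic :=
    Polynomial.monic_prod_of_monic _ _ fun Q hQ => ((mem_normFactors_iff hB0).1 hQ).1
  have hprod : ∏ P ∈ (normalizedFactors B).toFinset, P = (normalizedFactors B).prod := by
    rw [Finset.prod_eq_multiset_prod, hval, Multiset.map_id']
  exact (Polynomial.eq_of_monic_of_associated hmono hB (hprod ▸ hassoc)).symm

open UniqueFactorizationMonoid in
lemma struct_lemma {A : Polynomial F} (hA : A ≠ 0) {P : Polynomial F} {t : Finset (Polynomial F)}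
    (hP : P ∈ (normalizedFactors A).toFinset)
    (ht : ∀ Q ∈ t, Q ∈ (normalizedFactors A).toFinset ∧ P.natDegree < Q.natDegree) :
    (∏ Q ∈ insert P t, Q).Monic ∧ (∏ Q ∈ insert P t, Q) ∣ A ∧
      muFF (∏ Q ∈ insert P t, Q) = (-1) ^ (t.card + 1) ∧
      OmegaFF (∏ Q ∈ insert P t, Q) - 1 = (t.image Polynomial.natDegree).card ∧
      deltaSmall 1 (∏ Q ∈ insert P t, Q) = P.natDegree ∧
      Pmin (∏ Q ∈ insert P t, Q) = {P} := by
  have hPmi := (mem_normFactors_iff hA).1 hP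
  have hall : ∀ Q ∈ insert P t, Q.Monic ∧ Irreducible Q := by
    intro Q hQ
    rcases Finset.mem_insert.1 hQ with rfl | hQ
    · exact ⟨hPmi.1, hPmi.2.1⟩
    · have h := (mem_normFactors_iff hA).1 (ht Q hQ).1
      exact ⟨h.1, h.2.1⟩
  have hPt : P ∉ t := fun h => lt_irrefl _ (ht P h).2
  have hmono : (∏ Q ∈ insert P t, Q).Monic :=
    Polynomial.monic_prod_of_monic _ _ fun Q hQ => (hall Q hQ).1
  have hB0 := hmono.ne_zero
  have hdvd : (∏ Q ∈ insert P t, Q) ∣ A := by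
    refine prod_primes_dvd hA hall ?_
    intro Q hQ
    rcases Finset.mem_insert.1 hQ with rfl | hQ
    · exact hP
    · exact (ht Q hQ).1
  have hmu : muFF (∏ Q ∈ insert P t, Q) = (-1) ^ (t.card + 1) := by
    rw [muFF_prod hall, Finset.card_insert_of_notMem hPt]
  have hNS : NSet (∏ Q ∈ insert P t, Q)
      = insert P.natDegree (t.image Polynomial.natDegree) := by
    rw [NSet_eq hB0, pf_of_prod hall, Finset.image_insert]
  have hne : (NSet (∏ Q ∈ insert P t, Q)).Nonempty := by
    rw [hNS]; exact Finset.insert_nonempty _ _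
  have hPd : P.natDegree ∉ t.image Polynomial.natDegree := by
    intro h
    obtain ⟨Q, hQ, hQd⟩ := Finset.mem_image.1 h
    exact lt_irrefl _ (hQd ▸ (ht Q hQ).2)
  have hOm : OmegaFF (∏ Q ∈ insert P t, Q) - 1 = (t.image Polynomial.natDegree).card := by
    rw [OmegaFF, hNS, Finset.card_insert_of_notMem hPd]; omega
  have hds : deltaSmall 1 (∏ Q ∈ insert P t, Q) = P.natDegree := by
    rw [deltaSmall_one_eq_min' hne]
    apply le_antisymm
    · exact Finset.min'_le _ _ (by rw [hNS]; exact Finset.mem_insert_self _ _)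
    · apply Finset.le_min'
      intro d hd
      rw [hNS] at hd
      rcases Finset.mem_insert.1 hd with rfl | hd
      · exact le_refl _
      · obtain ⟨Q, hQ, rfl⟩ := Finset.mem_image.1 hd
        exact (ht Q hQ).2.le
  refine ⟨hmono, hdvd, hmu, hOm, hds, ?_⟩
  ext Q
  simp only [Pmin, Set.mem_setOf_eq, Set.mem_singleton_iff, hds]
  constructor
  · rintro ⟨hQm, hQi, hQd, hQdeg⟩
    have hQmem : Q ∈ insert P t := by
      rw [← pf_of_prod hall]
      exact (mem_normFactors_iff hB0).2 ⟨hQm, hQi, hQd⟩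
    rcases Finset.mem_insert.1 hQmem with rfl | hQt
    · rfl
    · exact absurd hQdeg (by have := (ht Q hQt).2; omega)
  · rintro rfl
    exact ⟨hPmi.1, hPmi.2.1, Finset.dvd_prod_of_mem _ (Finset.mem_insert_self _ _), rfl⟩

open UniqueFactorizationMonoid in
lemma recover_lemma {A : Polynomial F} (hA : A ≠ 0) {S : Set (Polynomial F)} {B : Polynomial F}
    (hBd : B ∣ A) (hBD : B ∈ DSet S) (hsq : Squarefree B) :
    ∃ P t, (P ∈ (normalizedFactors A).toFinset ∧ P ∈ S) ∧
      (∀ Q ∈ t, Q ∈ (normalizedFactors A).toFinset ∧ P.natDegree < Q.natDegree) ∧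
      B = ∏ Q ∈ insert P t, Q := by
  obtain ⟨hBm, P, hPS, hPmin⟩ := hBD
  have hB0 : B ≠ 0 := hBm.ne_zero
  have hP : P ∈ Pmin B := by rw [hPmin]; exact Set.mem_singleton P
  obtain ⟨hPm, hPi, hPd, hPdeg⟩ := hP
  have hPpfA : P ∈ (normalizedFactors A).toFinset :=
    (mem_normFactors_iff hA).2 ⟨hPm, hPi, hPd.trans hBd⟩
  have hPB : P ∈ (normalizedFactors B).toFinset :=
    (mem_normFactors_iff hB0).2 ⟨hPm, hPi, hPd⟩
  refine ⟨P, ((normalizedFactors B).toFinset).erase P, ⟨hPpfA, hPS⟩, ?_, ?_⟩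
  · intro Q hQ
    have hQne : Q ≠ P := Finset.ne_of_mem_erase hQ
    have hQB : Q ∈ (normalizedFactors B).toFinset := Finset.mem_of_mem_erase hQ
    obtain ⟨hQm, hQi, hQd⟩ := (mem_normFactors_iff hB0).1 hQB
    refine ⟨(mem_normFactors_iff hA).2 ⟨hQm, hQi, hQd.trans hBd⟩, ?_⟩
    have hdm : Q.natDegree ∈ NSet B := by
      rw [NSet_eq hB0]; exact Finset.mem_image.2 ⟨Q, hQB, rfl⟩
    have hne : (NSet B).Nonempty := ⟨_, hdm⟩
    have hge : P.natDegree ≤ Q.natDegree := by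
      rw [hPdeg, deltaSmall_one_eq_min' hne]
      exact Finset.min'_le _ _ hdm
    rcases lt_or_eq_of_le hge with h | h
    · exact h
    · exfalso
      apply hQne
      have hQP : Q ∈ Pmin B := ⟨hQm, hQi, hQd, by rw [← h, hPdeg]⟩
      rw [hPmin] at hQP
      exact hQP
  · rw [Finset.insert_erase hPB]
    exact prod_eq_of_squarefree hBm hsq

open UniqueFactorizationMonoid in
/-- Higher order duality over 𝔽_q[T] (Theorem 2.1). -/
theorem stmt0 (A : Polynomial F) (hA : A.Monic)
    (S : Set (Polynomial F)) (hS : S ⊆ {P : Polynomial F | P.Monic ∧ Irreducible P})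
    (f : ℕ → ℂ) (hf : f 0 = 0) (k : ℕ) (hk : 0 < k) :
    ∑ᶠ B ∈ {B : Polynomial F | B.Monic ∧ B ∣ A ∧ B ∈ DSet S},
        (muFF B : ℂ) * (Nat.choose (OmegaFF B - 1) (k - 1) : ℂ) * f (deltaSmall 1 B)
      = (-1) ^ k * (QS S k A : ℂ) * f (DeltaLarge k A) := by
  classical
  have hA0 : A ≠ 0 := hA.ne_zero
  set pfA := (normalizedFactors A).toFinset with hpfA
  set g : Polynomial F → ℂ := fun B =>
    (muFF B : ℂ) * (Nat.choose (OmegaFF B - 1) (k - 1) : ℂ) * f (deltaSmall 1 B) with hg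
  set Pset := pfA.filter (fun P => P ∈ S) with hPset
  set big : Polynomial F → Finset (Polynomial F) :=
    fun P => pfA.filter (fun Q => P.natDegree < Q.natDegree) with hbig
  set Idx := Pset.sigma (fun P => (big P).powerset) with hIdx
  set mp : (Σ _ : Polynomial F, Finset (Polynomial F)) → Polynomial F :=
    fun x => ∏ Q ∈ insert x.1 x.2, Q with hmp
  have hIdx_cond : ∀ x ∈ Idx, x.1 ∈ pfA ∧ x.1 ∈ S ∧
      ∀ Q ∈ x.2, Q ∈ pfA ∧ x.1.natDegree < Q.natDegree := by
    intro x hx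
    rw [hIdx, Finset.mem_sigma] at hx
    obtain ⟨hx1, hx2⟩ := hx
    rw [hPset, Finset.mem_filter] at hx1
    rw [Finset.mem_powerset] at hx2
    refine ⟨hx1.1, hx1.2, fun Q hQ => ?_⟩
    have := hx2 hQ
    rw [hbig, Finset.mem_filter] at this
    exact this
  -- Step 1: finsum to sum over image
  have hsupp : {B : Polynomial F | B.Monic ∧ B ∣ A ∧ B ∈ DSet S} ∩ Function.support g
      = ↑(Idx.image mp) ∩ Function.support g := by
    ext B
    simp only [Set.mem_inter_iff, Set.mem_setOf_eq, Finset.coe_image, Set.mem_image,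
      Finset.mem_coe]
    constructor
    · rintro ⟨⟨hBm, hBd, hBD⟩, hBsupp⟩
      refine ⟨?_, hBsupp⟩
      have hsq : Squarefree B := by
        by_contra hns
        apply hBsupp
        rw [hg]
        simp [muFF, hns]
      obtain ⟨P, t, ⟨hPpf, hPS'⟩, ht, hBeq⟩ := recover_lemma hA0 hBd hBD hsq
      refine ⟨⟨P, t⟩, ?_, hBeq.symm⟩
      rw [hIdx, Finset.mem_sigma]
      constructor
      · rw [hPset, Finset.mem_filter]; exact ⟨hPpf, hPS'⟩
      · rw [Finset.mem_powerset]
        intro Q hQ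
        rw [hbig, Finset.mem_filter]
        exact ⟨(ht Q hQ).1, (ht Q hQ).2⟩
    · rintro ⟨⟨x, hx, rfl⟩, hBsupp⟩
      obtain ⟨hP, hPS', ht⟩ := hIdx_cond x hx
      obtain ⟨hm, hd, -, -, -, hpm⟩ := struct_lemma hA0 hP ht
      exact ⟨⟨hm, hd, hm, x.1, hPS', hpm⟩, hBsupp⟩
  rw [finsum_mem_eq_sum_of_inter_support_eq g hsupp]
  -- Step 2: sum over image to sum over Idx
  have hinj : ∀ x ∈ Idx, ∀ y ∈ Idx, mp x = mp y → x = y := by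
    intro x hx y hy heq
    obtain ⟨hPx, -, htx⟩ := hIdx_cond x hx
    obtain ⟨hPy, -, hty⟩ := hIdx_cond y hy
    have hallx : ∀ Q ∈ insert x.1 x.2, Q.Monic ∧ Irreducible Q := by
      intro Q hQ
      rcases Finset.mem_insert.1 hQ with rfl | hQ
      · have := (mem_normFactors_iff hA0).1 hPx; exact ⟨this.1, this.2.1⟩
      · have := (mem_normFactors_iff hA0).1 (htx Q hQ).1; exact ⟨this.1, this.2.1⟩
    have hally : ∀ Q ∈ insert y.1 y.2, Q.Monic ∧ Irreducible Q := by
      intro Q hQ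
      rcases Finset.mem_insert.1 hQ with rfl | hQ
      · have := (mem_normFactors_iff hA0).1 hPy; exact ⟨this.1, this.2.1⟩
      · have := (mem_normFactors_iff hA0).1 (hty Q hQ).1; exact ⟨this.1, this.2.1⟩
    have hsets : insert x.1 x.2 = insert y.1 y.2 := by
      rw [← pf_of_prod hallx, ← pf_of_prod hally]
      rw [hmp] at heq
      simp only at heq
      rw [heq]
    have hxy1 : x.1 = y.1 := by
      have hx1 : x.1 ∈ insert y.1 y.2 := hsets ▸ Finset.mem_insert_self x.1 x.2
      have hy1 : y.1 ∈ insert x.1 x.2 := hsets.symm ▸ Finset.mem_insert_self y.1 y.2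
      rcases Finset.mem_insert.1 hx1 with h | h
      · exact h
      · rcases Finset.mem_insert.1 hy1 with h' | h'
        · exact h'.symm
        · have l1 := (hty x.1 h).2
          have l2 := (htx y.1 h').2
          omega
    have hPtx : x.1 ∉ x.2 := fun h => lt_irrefl _ (htx x.1 h).2
    have hPty : y.1 ∉ y.2 := fun h => lt_irrefl _ (hty y.1 h).2
    have hxy2 : x.2 = y.2 := by
      have e1 : x.2 = (insert x.1 x.2).erase x.1 := (Finset.erase_insert hPtx).symm
      have e2 : y.2 = (insert y.1 y.2).erase y.1 := (Finset.erase_insert hPty).symm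
      rw [e1, e2, hsets, hxy1]
    obtain ⟨x1, x2⟩ := x
    obtain ⟨y1, y2⟩ := y
    simp only at hxy1 hxy2
    subst hxy1; subst hxy2; rfl
  rw [Finset.sum_image hinj]
  -- Step 3: evaluate the summand
  have hterm : ∀ x ∈ Idx, g (mp x) = (-1 : ℂ) ^ (x.2.card + 1) *
      (((x.2.image Polynomial.natDegree).card.choose (k - 1) : ℕ) : ℂ) * f x.1.natDegree := by
    intro x hx
    obtain ⟨hP, -, ht⟩ := hIdx_cond x hx
    obtain ⟨-, -, hmu, hOm, hds, -⟩ := struct_lemma hA0 hP ht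
    rw [hg, hmp]
    simp only
    rw [hmu, hOm, hds]
    push_cast
    ring
  rw [Finset.sum_congr rfl hterm, hIdx, Finset.sum_sigma]
  -- Step 4: inner sum via combinatorial identity
  have himg : ∀ P, (big P).image Polynomial.natDegree
      = (NSet A).filter (fun x => P.natDegree < x) := by
    intro P
    ext d
    rw [NSet_eq hA0]
    simp only [hbig, Finset.mem_image, Finset.mem_filter]
    constructor
    · rintro ⟨Q, ⟨hQA, hQd⟩, rfl⟩
      exact ⟨⟨Q, hQA, rfl⟩, hQd⟩
    · rintro ⟨⟨Q, hQA, rfl⟩, hPd⟩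
      exact ⟨Q, ⟨hQA, hPd⟩, rfl⟩
  have hpow : (-1 : ℂ) ^ k = (-1) ^ (k - 1) * (-1) := by
    conv_lhs => rw [show k = (k - 1) + 1 by omega]
    rw [pow_succ]
  have hinner : ∀ P ∈ Pset, (∑ t ∈ (big P).powerset, (-1 : ℂ) ^ (t.card + 1) *
        (((t.image Polynomial.natDegree).card.choose (k - 1) : ℕ) : ℂ) * f P.natDegree)
      = (-1 : ℂ) ^ k *
          (if ((NSet A).filter (fun x => P.natDegree < x)).card = k - 1 then 1 else 0) *
          f P.natDegree := by
    intro P _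
    have h1 : ∀ t ∈ (big P).powerset, (-1 : ℂ) ^ (t.card + 1) *
          (((t.image Polynomial.natDegree).card.choose (k - 1) : ℕ) : ℂ) * f P.natDegree
        = (-f P.natDegree) * ((-1 : ℂ) ^ t.card *
            (((t.image Polynomial.natDegree).card.choose (k - 1) : ℕ) : ℂ)) := by
      intro t _
      rw [pow_succ]
      ring
    rw [Finset.sum_congr rfl h1, ← Finset.mul_sum, comb_sum (big P) Polynomial.natDegree (k - 1),
      himg P, hpow]
    ring
  rw [Finset.sum_congr rfl hinner]
  -- Step 5: endgame
  rcases le_or_gt k (NSet A).card with hkn | hkn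
  · have hQSeq : (QS S k A : ℂ) =
        ((Pset.filter (fun P => P.natDegree = DeltaLarge k A)).card : ℂ) := by
      have hseteq : {P : Polynomial F | P ∈ S ∧ P ∣ A ∧ P.natDegree = DeltaLarge k A}
          = ↑(Pset.filter (fun P => P.natDegree = DeltaLarge k A)) := by
        ext P
        simp only [Set.mem_setOf_eq, Finset.coe_filter, hPset, Finset.mem_filter]
        constructor
        · rintro ⟨hPS', hPd, hdeg⟩
          have hmi := hS hPS'
          exact ⟨⟨(mem_normFactors_iff hA0).2 ⟨hmi.1, hmi.2, hPd⟩, hPS'⟩, hdeg⟩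
        · rintro ⟨⟨hpf, hPS'⟩, hdeg⟩
          exact ⟨hPS', ((mem_normFactors_iff hA0).1 hpf).2.2, hdeg⟩
      rw [QS, hseteq, Set.ncard_coe_finset]
    have hstep : ∀ P ∈ Pset, (-1 : ℂ) ^ k *
          (if ((NSet A).filter (fun x => P.natDegree < x)).card = k - 1 then 1 else 0) *
          f P.natDegree
        = (if P.natDegree = DeltaLarge k A then (-1 : ℂ) ^ k * f (DeltaLarge k A) else 0) := by
      intro P hP
      have hdmem : P.natDegree ∈ NSet A := by
        rw [NSet_eq hA0]
        rw [hPset, Finset.mem_filter] at hP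
        exact Finset.mem_image.2 ⟨P, hP.1, rfl⟩
      by_cases h : P.natDegree = DeltaLarge k A
      · rw [if_pos ((count_eq_iff hk hkn hdmem).2 h), if_pos h, h, mul_one]
      · rw [if_neg (fun hc => h ((count_eq_iff hk hkn hdmem).1 hc)), if_neg h, mul_zero,
          zero_mul]
    rw [Finset.sum_congr rfl hstep, ← Finset.sum_filter, Finset.sum_const, nsmul_eq_mul,
      hQSeq]
    ring
  · have hzero : ∀ P ∈ Pset, (-1 : ℂ) ^ k *
          (if ((NSet A).filter (fun x => P.natDegree < x)).card = k - 1 then 1 else 0) *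
          f P.natDegree = 0 := by
      intro P hP
      have hdmem : P.natDegree ∈ NSet A := by
        rw [NSet_eq hA0]
        rw [hPset, Finset.mem_filter] at hP
        exact Finset.mem_image.2 ⟨P, hP.1, rfl⟩
      have hsubset : (NSet A).filter (fun x => P.natDegree < x)
          ⊆ (NSet A).erase P.natDegree := by
        intro x hx
        exact Finset.mem_erase.2 ⟨(Finset.mem_filter.1 hx).2.ne', (Finset.mem_filter.1 hx).1⟩
      have hcard := Finset.card_le_card hsubset
      rw [Finset.card_erase_of_mem hdmem] at hcard
      have hpos : 0 < (NSet A).card := Finset.card_pos.2 ⟨_, hdmem⟩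
      have hne : ¬ ((NSet A).filter (fun x => P.natDegree < x)).card = k - 1 := by omega
      rw [if_neg hne, mul_zero, zero_mul]
    rw [Finset.sum_eq_zero hzero, DeltaLarge_eq_zero hkn, hf, mul_zero]
end

section
/- Let q be a prime power, A ∈ 𝔽_q[T] monic, and ℓ ≥ 0 an integer. Then the sum over monic divisors B of A of μ(B)·(Ω(B)+1)·Ω(B)·(Ω(B)−1)···(Ω(B)−ℓ) equals (−1)^{Ω(A)}·(Ω(A)+1)! if ℓ = Ω(A)−1, equals (−1)^{Ω(A)}·Ω(A)! if ℓ = Ω(A)−2, and equals 0 otherwise. -/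
open Filter Topology Polynomial Asymptotics
open scoped Classical

variable {F : Type} [Field F] [Fintype F]

/-! ### Auxiliary lemmas -/

section Aux

set_option linter.unusedSectionVars false

open UniqueFactorizationMonoid

/-- The basic alternating binomial sum against a falling-factorial-type product. -/
noncomputable def Usum7 (n m : ℕ) : ℤ :=
  ∑ k ∈ Finset.range (n+1), (-1)^k * (n.choose k : ℤ) * ∏ i ∈ Finset.range m, ((k:ℤ)+1-(i:ℤ))

lemma prodDiff7 (k m : ℕ) :
    (∏ i ∈ Finset.range (m+1), ((k:ℤ)+2 - i)) - (∏ i ∈ Finset.range (m+1), ((k:ℤ)+1 - i))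
      = ((m:ℤ)+1) * ∏ i ∈ Finset.range m, ((k:ℤ)+1-(i:ℤ)) := by
  rw [Finset.prod_range_succ' (fun i => ((k:ℤ)+2 - i)), Finset.prod_range_succ]
  have : ∀ i ∈ Finset.range m, ((k:ℤ)+2 - ((i:ℕ)+1:ℕ)) = ((k:ℤ)+1-(i:ℤ)) := by
    intro i _; push_cast; ring
  rw [Finset.prod_congr rfl this]
  push_cast; ring

lemma Usum7_succ (n m : ℕ) : Usum7 (n+1) (m+1) = -((m:ℤ)+1) * Usum7 n m := by
  set F : ℕ → ℤ := fun k => ∏ i ∈ Finset.range (m+1), ((k:ℤ)+1-(i:ℤ)) with hF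
  set G : ℕ → ℤ := fun k => ∏ i ∈ Finset.range m, ((k:ℤ)+1-(i:ℤ)) with hG
  have hdiff : ∀ k : ℕ, F (k+1) = F k + ((m:ℤ)+1) * G k := by
    intro k
    have h1 : F (k+1) = ∏ i ∈ Finset.range (m+1), ((k:ℤ)+2-(i:ℤ)) := by
      rw [hF]
      refine Finset.prod_congr rfl fun i _ => ?_
      push_cast; ring
    have := prodDiff7 k m
    rw [h1, hF, hG]
    dsimp only
    linarith [prodDiff7 k m]
  have hS1 : Usum7 n (m+1) = ∑ k ∈ Finset.range (n+1), (-1)^k * (n.choose k : ℤ) * F k := rfl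
  have hS4 : Usum7 n m = ∑ k ∈ Finset.range (n+1), (-1)^k * (n.choose k : ℤ) * G k := rfl
  set S2 : ℤ := ∑ k ∈ Finset.range (n+1), (-1)^k * (n.choose k : ℤ) * F (k+1) with hS2
  set S3 : ℤ := ∑ k ∈ Finset.range (n+1), (-1)^k * (n.choose (k+1) : ℤ) * F (k+1) with hS3
  have hB : S3 = F 0 - Usum7 n (m+1) := by
    have e1 : Usum7 n (m+1) = (∑ k ∈ Finset.range n, (-1)^(k+1) * (n.choose (k+1) : ℤ) * F (k+1)) + (-1)^0 * (n.choose 0 : ℤ) * F 0 := by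
      rw [hS1, Finset.sum_range_succ' (fun k => (-1)^k * (n.choose k : ℤ) * F k)]
    have e2 : S3 = (∑ k ∈ Finset.range n, (-1)^k * (n.choose (k+1) : ℤ) * F (k+1)) + (-1)^n * (n.choose (n+1) : ℤ) * F (n+1) := by
      rw [hS3, Finset.sum_range_succ]
    rw [Nat.choose_succ_self] at e2
    have e3 : ∑ k ∈ Finset.range n, (-1:ℤ)^(k+1) * (n.choose (k+1) : ℤ) * F (k+1)
        = - ∑ k ∈ Finset.range n, (-1:ℤ)^k * (n.choose (k+1) : ℤ) * F (k+1) := by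
      rw [← Finset.sum_neg_distrib]
      refine Finset.sum_congr rfl fun k _ => ?_
      ring
    rw [e3] at e1
    simp at e1 e2 ⊢
    linarith
  have hC : S2 - Usum7 n (m+1) = ((m:ℤ)+1) * Usum7 n m := by
    rw [hS2, hS1, hS4, ← Finset.sum_sub_distrib, Finset.mul_sum]
    refine Finset.sum_congr rfl fun k _ => ?_
    rw [hdiff k]; ring
  have hA : Usum7 (n+1) (m+1) = F 0 - S2 - S3 := by
    show (∑ k ∈ Finset.range (n+1+1), (-1)^k * ((n+1).choose k : ℤ) * F k) = _
    rw [Finset.sum_range_succ' (fun k => (-1)^k * ((n+1).choose k : ℤ) * F k)]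
    have e4 : ∀ k ∈ Finset.range (n+1), (-1:ℤ)^(k+1) * ((n+1).choose (k+1) : ℤ) * F (k+1)
        = -((-1)^k * (n.choose k : ℤ) * F (k+1)) - (-1)^k * (n.choose (k+1) : ℤ) * F (k+1) := by
      intro k _
      rw [Nat.choose_succ_succ]
      push_cast
      ring
    rw [Finset.sum_congr rfl e4]
    rw [Finset.sum_sub_distrib]
    simp only [Finset.sum_neg_distrib]
    rw [hS2, hS3]
    simp
    ring
  rw [hA, hB]
  linarith

lemma Usum7_eq (n m : ℕ) :
    Usum7 n m = if m = n+1 then (-1)^n * (((n+1).factorial : ℕ) : ℤ)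
      else if m = n then (-1)^n * ((n.factorial : ℕ) : ℤ) else 0 := by
  induction n generalizing m with
  | zero =>
    match m with
    | 0 => simp [Usum7]
    | 1 => simp [Usum7]
    | (m+2) =>
      have h0 : Usum7 0 (m+2) = ∏ i ∈ Finset.range (m+2), ((0:ℤ)+1-(i:ℤ)) := by
        simp [Usum7]
      rw [h0, Finset.prod_eq_zero (i := 1) (by simp [Finset.mem_range])]
      · simp
      · norm_num
  | succ n ih =>
    match m with
    | 0 =>
      have h0 : Usum7 (n+1) 0 = ∑ k ∈ Finset.range (n+1+1), (-1:ℤ)^k * ((n+1).choose k : ℤ) := by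
        simp [Usum7]
      rw [h0, if_neg (by omega), if_neg (by omega)]
      exact Int.alternating_sum_range_choose_of_ne (Nat.succ_ne_zero n)
    | (m+1) =>
      rw [Usum7_succ, ih m]
      rcases eq_or_ne m (n+1) with rfl | h1
      · rw [if_pos rfl, if_pos rfl]
        rw [show (n+1+1).factorial = (n+1+1) * (n+1).factorial from Nat.factorial_succ (n+1)]
        push_cast
        ring
      · rw [if_neg h1]
        rcases eq_or_ne m n with rfl | h2
        · rw [if_pos rfl, if_neg (by omega), if_pos rfl]
          rw [Nat.factorial_succ m]
          push_cast; ring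
        · rw [if_neg h2, if_neg (by omega), if_neg (by omega)]
          ring

/-- Counting subsets with prescribed image under `d`, with alternating signs. -/
lemma count7 {α β : Type*} [DecidableEq β] (d : α → β) (P : Finset α) (T : Finset β) :
    ∑ S ∈ P.powerset, (if S.image d = T then (-1:ℤ)^S.card else 0)
      = if T ⊆ P.image d then (-1:ℤ)^T.card else 0 := by
  classical
  induction P using Finset.induction_on generalizing T with
  | empty =>
    rcases eq_or_ne T ∅ with rfl | hT
    · simp
    · simp [hT, Ne.symm hT, Finset.subset_empty]
  | @insert a P ha ih =>
    rw [Finset.powerset_insert, Finset.sum_union, Finset.sum_image]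
    rotate_left
    · intro x hx y hy hxy
      have hax : a ∉ x := fun h => ha (Finset.mem_powerset.1 hx h)
      have hay : a ∉ y := fun h => ha (Finset.mem_powerset.1 hy h)
      rw [← Finset.erase_insert hax, ← Finset.erase_insert hay, hxy]
    · rw [Finset.disjoint_right]
      intro S hS hS'
      obtain ⟨S', hS'mem, rfl⟩ := Finset.mem_image.1 hS
      exact ha (Finset.mem_powerset.1 hS' (Finset.mem_insert_self a S'))
    have hcard : ∀ S ∈ P.powerset, (insert a S).card = S.card + 1 := by
      intro S hS
      exact Finset.card_insert_of_notMem (fun h => ha (Finset.mem_powerset.1 hS h))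
    by_cases hdT : d a ∈ T
    · have hterm : ∀ S ∈ P.powerset,
          (if (insert a S).image d = T then (-1:ℤ)^(insert a S).card else 0)
          = -(if S.image d = T then (-1:ℤ)^S.card else 0)
            + -(if S.image d = T.erase (d a) then (-1:ℤ)^S.card else 0) := by
        intro S hS
        rw [Finset.image_insert, hcard S hS]
        by_cases h1 : S.image d = T
        · have : insert (d a) (S.image d) = T := by rw [h1, Finset.insert_eq_self.2 hdT]
          rw [if_pos this, if_pos h1, if_neg, pow_succ]
          · ring
          · rw [h1]; intro h
            exact (Finset.notMem_erase (d a) T) (h ▸ hdT)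
        · by_cases h2 : S.image d = T.erase (d a)
          · have : insert (d a) (S.image d) = T := by rw [h2, Finset.insert_erase hdT]
            rw [if_pos this, if_neg h1, if_pos h2, pow_succ]
            ring
          · have : insert (d a) (S.image d) ≠ T := by
              intro h
              by_cases hda : d a ∈ S.image d
              · rw [Finset.insert_eq_self.2 hda] at h; exact h1 h
              · exact h2 (by rw [← h, Finset.erase_insert hda])
            rw [if_neg this, if_neg h1, if_neg h2]
            ring
      rw [Finset.sum_congr rfl hterm, Finset.sum_add_distrib, Finset.sum_neg_distrib,
        Finset.sum_neg_distrib, ih, ih]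
      have hsub : T ⊆ (insert a P).image d ↔ T.erase (d a) ⊆ P.image d := by
        rw [Finset.image_insert]
        constructor
        · intro h x hx
          have hxT := Finset.mem_of_mem_erase hx
          rcases Finset.mem_insert.1 (h hxT) with rfl | h'
          · exact absurd rfl (Finset.ne_of_mem_erase hx)
          · exact h'
        · intro h
          intro x hx
          rcases eq_or_ne x (d a) with rfl | hxa
          · exact Finset.mem_insert_self _ _
          · exact Finset.mem_insert_of_mem (h (Finset.mem_erase.2 ⟨hxa, hx⟩))
      rw [if_congr hsub rfl rfl]
      by_cases hTP : T.erase (d a) ⊆ P.image d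
      · rw [if_pos hTP, if_pos hTP, Finset.card_erase_of_mem hdT]
        have hT1 : 1 ≤ T.card := Finset.card_pos.2 ⟨d a, hdT⟩
        have hpow : (-1:ℤ)^T.card = -(-1:ℤ)^(T.card - 1) := by
          conv_lhs => rw [show T.card = (T.card - 1) + 1 from by omega]
          rw [pow_succ]; ring
        rw [hpow]
        by_cases hTP2 : T ⊆ P.image d
        · rw [if_pos hTP2]; ring
        · rw [if_neg hTP2]; ring
      · rw [if_neg hTP, if_neg hTP]
        by_cases hTP2 : T ⊆ P.image d
        · exfalso
          exact hTP ((Finset.erase_subset _ _).trans hTP2)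
        · rw [if_neg hTP2]; ring
    · have hterm : ∀ S ∈ P.powerset,
          (if (insert a S).image d = T then (-1:ℤ)^(insert a S).card else 0) = 0 := by
        intro S hS
        rw [Finset.image_insert, if_neg]
        intro h
        exact hdT (h ▸ Finset.mem_insert_self _ _)
      rw [Finset.sum_congr rfl hterm, Finset.sum_const_zero, add_zero, ih]
      have hsub : T ⊆ (insert a P).image d ↔ T ⊆ P.image d := by
        rw [Finset.image_insert]
        constructor
        · intro h x hx
          rcases Finset.mem_insert.1 (h hx) with rfl | h'
          · exact absurd hx hdT
          · exact h'
        · intro h; exact h.trans (Finset.subset_insert _ _)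
      rw [if_congr hsub rfl rfl]

lemma mem_nf_iff7 {B : Polynomial F} (hB0 : B ≠ 0) (p : Polynomial F) :
    p ∈ (normalizedFactors B).toFinset ↔ p.Monic ∧ Irreducible p ∧ p ∣ B := by
  rw [Multiset.mem_toFinset]
  constructor
  · intro h
    have hirr := irreducible_of_normalized_factor p h
    have hnorm : normalize p = p := normalize_normalized_factor p h
    have hp0 : p ≠ 0 := hirr.ne_zero
    have hmon : p.Monic := by
      have := Polynomial.monic_normalize (R := F) hp0
      rwa [hnorm] at this
    exact ⟨hmon, hirr, dvd_of_mem_normalizedFactors h⟩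
  · rintro ⟨hmon, hirr, hdvd⟩
    obtain ⟨q, hq, hassoc⟩ := exists_mem_normalizedFactors_of_dvd hB0 hirr hdvd
    have hq0 : q ≠ 0 := (irreducible_of_normalized_factor q hq).ne_zero
    have hqmon : q.Monic := by
      have := Polynomial.monic_normalize (R := F) hq0
      rwa [normalize_normalized_factor q hq] at this
    rwa [Polynomial.eq_of_monic_of_associated hmon hqmon hassoc]

lemma nf_prod_eq7 {B : Polynomial F} (hB : B.Monic) :
    (normalizedFactors B).prod = B := by
  have hB0 : B ≠ 0 := hB.ne_zero
  have hmonprod : (normalizedFactors B).prod.Monic := by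
    have := Polynomial.monic_multiset_prod_of_monic (normalizedFactors B) id
      (fun p hp => ((mem_nf_iff7 hB0 p).1 (Multiset.mem_toFinset.2 hp)).1)
    simpa using this
  exact Polynomial.eq_of_monic_of_associated hmonprod hB (prod_normalizedFactors hB0)

lemma NSet_eq7 {B : Polynomial F} (hB : B.Monic) :
    NSet B = ((normalizedFactors B).toFinset).image Polynomial.natDegree := by
  have hB0 : B ≠ 0 := hB.ne_zero
  ext d
  simp only [NSet, Finset.mem_filter, Finset.mem_range, Finset.mem_image]
  constructor
  · rintro ⟨-, p, hmon, hirr, hdvd, rfl⟩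
    exact ⟨p, (mem_nf_iff7 hB0 p).2 ⟨hmon, hirr, hdvd⟩, rfl⟩
  · rintro ⟨p, hp, rfl⟩
    obtain ⟨hmon, hirr, hdvd⟩ := (mem_nf_iff7 hB0 p).1 hp
    refine ⟨?_, p, hmon, hirr, hdvd, rfl⟩
    have := Polynomial.natDegree_le_natDegree (Polynomial.degree_le_of_dvd hdvd hB0)
    omega

lemma prod_mem_iff7 {A : Polynomial F} (hA : A.Monic)
    (S : Finset (Polynomial F)) (hS : S ⊆ (normalizedFactors A).toFinset) :
    (∏ p ∈ S, p).Monic ∧ (∏ p ∈ S, p) ∣ A ∧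
      normalizedFactors (∏ p ∈ S, p) = S.val := by
  have hA0 : A ≠ 0 := hA.ne_zero
  have hmem : ∀ p ∈ S, p.Monic ∧ Irreducible p ∧ p ∣ A := fun p hp =>
    (mem_nf_iff7 hA0 p).1 (hS hp)
  have hmon : (∏ p ∈ S, p).Monic :=
    Polynomial.monic_prod_of_monic S _ (fun p hp => (hmem p hp).1)
  have hprodval : ∏ p ∈ S, p = S.val.prod := by
    rw [Finset.prod_eq_multiset_prod]; simp
  have hle : S.val ≤ normalizedFactors A := by
    refine le_trans ?_ (Multiset.dedup_le _)
    have := Finset.val_le_iff.2 hS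
    exact this
  have hdvd : (∏ p ∈ S, p) ∣ A := by
    rw [hprodval]
    exact dvd_trans (Multiset.prod_dvd_prod_of_le hle) (prod_normalizedFactors hA0).dvd
  refine ⟨hmon, hdvd, ?_⟩
  rw [hprodval, normalizedFactors_prod_eq _ (fun p hp => ((hmem p (by simpa using hp)).2.1))]
  rw [Multiset.map_congr rfl (fun p hp => ((hmem p (by simpa using hp)).1).normalize_eq_self)]
  simp

end Aux

/-- Corollary 4.5: evaluation of `∑_{B ∣ A} μ(B) (Ω(B)+1)Ω(B)(Ω(B)-1)⋯(Ω(B)-ℓ)`. -/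
theorem stmt7 (A : Polynomial F) (hA : A.Monic) (ℓ : ℕ) :
    ∑ᶠ B ∈ {B : Polynomial F | B.Monic ∧ B ∣ A},
        (muFF B : ℤ) * ∏ i ∈ Finset.range (ℓ + 2), ((OmegaFF B : ℤ) + 1 - (i : ℤ))
      = if (ℓ : ℤ) = (OmegaFF A : ℤ) - 1 then
          (-1) ^ OmegaFF A * (Nat.factorial (OmegaFF A + 1) : ℤ)
        else if (ℓ : ℤ) = (OmegaFF A : ℤ) - 2 then
          (-1) ^ OmegaFF A * (Nat.factorial (OmegaFF A) : ℤ)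
        else 0 := by
  classical
  have hA0 : A ≠ 0 := hA.ne_zero
  set P : Finset (Polynomial F) := (UniqueFactorizationMonoid.normalizedFactors A).toFinset with hP
  -- Step 1: the set of monic divisors is finite
  have hfin : {B : Polynomial F | B.Monic ∧ B ∣ A}.Finite := by
    apply Set.Finite.subset (Finset.finite_toSet
      (((UniqueFactorizationMonoid.normalizedFactors A).powerset.toFinset).image Multiset.prod))
    rintro B ⟨hBmon, hBdvd⟩
    have hB0 : B ≠ 0 := hBmon.ne_zero
    have hle := (UniqueFactorizationMonoid.dvd_iff_normalizedFactors_le_normalizedFactors hB0 hA0).1 hBdvd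
    simp only [Finset.coe_image, Set.mem_image, Finset.mem_coe, Multiset.mem_toFinset,
      Multiset.mem_powerset]
    exact ⟨_, hle, nf_prod_eq7 hBmon⟩
  rw [← hfin.coe_toFinset, finsum_mem_coe_finset]
  set D := hfin.toFinset with hD
  have hDmem : ∀ B, B ∈ D ↔ B.Monic ∧ B ∣ A := fun B => hfin.mem_toFinset
  -- Step 2: restrict to squarefree divisors
  have hsq : ∀ B ∈ D, ((muFF B : ℤ) * ∏ i ∈ Finset.range (ℓ + 2), ((OmegaFF B : ℤ) + 1 - (i : ℤ))) ≠ 0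
      → Squarefree B := by
    intro B _ hne
    by_contra h
    apply hne
    rw [muFF, if_neg h, zero_mul]
  rw [← Finset.sum_filter_of_ne hsq]
  -- Step 3: reparametrize by subsets of the prime divisors
  have hbij : ∑ B ∈ D.filter Squarefree,
        ((muFF B : ℤ) * ∏ i ∈ Finset.range (ℓ + 2), ((OmegaFF B : ℤ) + 1 - (i : ℤ)))
      = ∑ S ∈ P.powerset, ((-1:ℤ)^S.card *
          ∏ i ∈ Finset.range (ℓ + 2), (((S.image Polynomial.natDegree).card : ℤ) + 1 - (i : ℤ))) := by
    refine Finset.sum_nbij' (fun B => (UniqueFactorizationMonoid.normalizedFactors B).toFinset)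
      (fun S => ∏ p ∈ S, p) ?_ ?_ ?_ ?_ ?_
    · intro B hB
      rw [Finset.mem_filter, hDmem] at hB
      obtain ⟨⟨hBmon, hBdvd⟩, hBsq⟩ := hB
      rw [Finset.mem_powerset]
      intro p hp
      obtain ⟨h1, h2, h3⟩ := (mem_nf_iff7 hBmon.ne_zero p).1 hp
      exact (mem_nf_iff7 hA0 p).2 ⟨h1, h2, h3.trans hBdvd⟩
    · intro S hS
      obtain ⟨hmon, hdvd, hnf⟩ := prod_mem_iff7 hA S (Finset.mem_powerset.1 hS)
      rw [Finset.mem_filter, hDmem]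
      refine ⟨⟨hmon, hdvd⟩, ?_⟩
      rw [UniqueFactorizationMonoid.squarefree_iff_nodup_normalizedFactors hmon.ne_zero, hnf]
      exact S.nodup
    · intro B hB
      rw [Finset.mem_filter, hDmem] at hB
      obtain ⟨⟨hBmon, hBdvd⟩, hBsq⟩ := hB
      have hnodup : (UniqueFactorizationMonoid.normalizedFactors B).Nodup :=
        (UniqueFactorizationMonoid.squarefree_iff_nodup_normalizedFactors hBmon.ne_zero).1 hBsq
      have hval : ((UniqueFactorizationMonoid.normalizedFactors B).toFinset).val
          = UniqueFactorizationMonoid.normalizedFactors B := by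
        rw [Multiset.toFinset_val, Multiset.dedup_eq_self.2 hnodup]
      show (∏ p ∈ (UniqueFactorizationMonoid.normalizedFactors B).toFinset, p) = B
      rw [Finset.prod_eq_multiset_prod]
      simp only [Multiset.map_id', hval]
      exact nf_prod_eq7 hBmon
    · intro S hS
      obtain ⟨-, -, hnf⟩ := prod_mem_iff7 hA S (Finset.mem_powerset.1 hS)
      show (UniqueFactorizationMonoid.normalizedFactors (∏ p ∈ S, p)).toFinset = S
      rw [hnf, Finset.val_toFinset]
    · intro B hB
      rw [Finset.mem_filter, hDmem] at hB
      obtain ⟨⟨hBmon, hBdvd⟩, hBsq⟩ := hB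
      rw [muFF, if_pos hBsq]
      have : OmegaFF B = (((UniqueFactorizationMonoid.normalizedFactors B).toFinset).image
          Polynomial.natDegree).card := by
        rw [OmegaFF, NSet_eq7 hBmon]
      rw [this]
  rw [hbij]
  -- Step 4: group by image of degrees
  have hgroup : ∑ S ∈ P.powerset, ((-1:ℤ)^S.card *
        ∏ i ∈ Finset.range (ℓ + 2), (((S.image Polynomial.natDegree).card : ℤ) + 1 - (i : ℤ)))
      = ∑ T ∈ (P.image Polynomial.natDegree).powerset, ((-1:ℤ)^T.card *
          ∏ i ∈ Finset.range (ℓ + 2), ((T.card : ℤ) + 1 - (i : ℤ))) := by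
    have h1 : ∀ S ∈ P.powerset, ((-1:ℤ)^S.card *
          ∏ i ∈ Finset.range (ℓ + 2), (((S.image Polynomial.natDegree).card : ℤ) + 1 - (i : ℤ)))
        = ∑ T ∈ (P.image Polynomial.natDegree).powerset,
            (if S.image Polynomial.natDegree = T then
              (-1:ℤ)^S.card * ∏ i ∈ Finset.range (ℓ + 2), ((T.card : ℤ) + 1 - (i : ℤ)) else 0) := by
      intro S hS
      rw [Finset.sum_ite_eq]
      rw [if_pos (Finset.mem_powerset.2 (Finset.image_subset_image (Finset.mem_powerset.1 hS)))]
    rw [Finset.sum_congr rfl h1, Finset.sum_comm]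
    refine Finset.sum_congr rfl fun T hT => ?_
    have h2 : ∀ S ∈ P.powerset,
        (if S.image Polynomial.natDegree = T then
          (-1:ℤ)^S.card * ∏ i ∈ Finset.range (ℓ + 2), ((T.card : ℤ) + 1 - (i : ℤ)) else 0)
        = (if S.image Polynomial.natDegree = T then (-1:ℤ)^S.card else 0)
            * ∏ i ∈ Finset.range (ℓ + 2), ((T.card : ℤ) + 1 - (i : ℤ)) := by
      intro S _
      split_ifs <;> simp
    rw [Finset.sum_congr rfl h2, ← Finset.sum_mul, count7, if_pos (Finset.mem_powerset.1 hT)]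
  rw [hgroup]
  have hN : P.image Polynomial.natDegree = NSet A := (NSet_eq7 hA).symm
  rw [hN]
  -- Step 5: group by cardinality
  have hcardsum : ∑ T ∈ (NSet A).powerset, ((-1:ℤ)^T.card *
        ∏ i ∈ Finset.range (ℓ + 2), ((T.card : ℤ) + 1 - (i : ℤ)))
      = Usum7 (OmegaFF A) (ℓ + 2) := by
    rw [Finset.sum_powerset]
    rw [Usum7]
    have hcard : (NSet A).card = OmegaFF A := rfl
    rw [hcard]
    refine Finset.sum_congr rfl fun j hj => ?_
    have := Finset.sum_powersetCard j (NSet A)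
      (fun c => (-1:ℤ)^c * ∏ i ∈ Finset.range (ℓ + 2), ((c : ℤ) + 1 - (i : ℤ)))
    rw [this, hcard, nsmul_eq_mul]
    push_cast
    ring
  rw [hcardsum, Usum7_eq]
  -- Step 6: match the conditions
  rcases eq_or_ne (ℓ + 2) (OmegaFF A + 1) with h1 | h1
  · rw [if_pos h1, if_pos (by omega : (ℓ : ℤ) = (OmegaFF A : ℤ) - 1)]
  · rw [if_neg h1]
    rcases eq_or_ne (ℓ + 2) (OmegaFF A) with h2 | h2
    · rw [if_pos h2, if_neg (by omega : ¬ (ℓ : ℤ) = (OmegaFF A : ℤ) - 1),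
        if_pos (by omega : (ℓ : ℤ) = (OmegaFF A : ℤ) - 2)]
    · rw [if_neg h2, if_neg (by omega : ¬ (ℓ : ℤ) = (OmegaFF A : ℤ) - 1),
        if_neg (by omega : ¬ (ℓ : ℤ) = (OmegaFF A : ℤ) - 2)]
end

section
/- Let q be a prime power. For every positive integer x, the sum over monic polynomials A ∈ 𝔽_q[T] with 1 ≤ deg A ≤ x of μ(A)·Ω(A)/q^{deg A} equals −#𝒲(x)/q^x, where 𝒲(x) is the set of monic polynomials B ∈ 𝔽_q[T] with deg B = x and Ω(B) = 1. -/
open Filter Topology Polynomial Asymptotics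
open scoped Classical

variable {F : Type} [Field F] [Fintype F]

set_option linter.unusedSectionVars false
section Aux
open UniqueFactorizationMonoid Finset Multiset

variable {A B C P Q : Polynomial F} {d n : ℕ}

lemma mem_nf_monic (h : Q ∈ normalizedFactors A) : Q.Monic := by
  have h0 : Q ≠ 0 := (irreducible_of_normalized_factor Q h).ne_zero
  have := normalize_normalized_factor Q h
  rw [← this]
  exact Polynomial.monic_normalize h0

lemma prod_nf (hA : A.Monic) : (normalizedFactors A).prod = A := by
  have h0 : A ≠ 0 := hA.ne_zero
  have h := UniqueFactorizationMonoid.prod_normalizedFactors h0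
  have hm : (normalizedFactors A).prod.Monic :=
    by simpa using Polynomial.monic_multiset_prod_of_monic _ id (fun Q hQ => mem_nf_monic hQ)
  exact Polynomial.eq_of_monic_of_associated hm hA h

lemma mem_NSet_iff (hA : A ≠ 0) :
    d ∈ NSet A ↔ ∃ P : Polynomial F, P.Monic ∧ Irreducible P ∧ P ∣ A ∧ P.natDegree = d := by
  rw [NSet, Finset.mem_filter, Finset.mem_range]
  constructor
  · rintro ⟨-, h⟩; exact h
  · rintro h
    refine ⟨?_, h⟩
    obtain ⟨P, hPm, hPi, hPd, rfl⟩ := h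
    have := Polynomial.natDegree_le_natDegree (Polynomial.degree_le_of_dvd hPd hA)
    omega

lemma NSet_one : NSet (1 : Polynomial F) = ∅ := by
  ext d
  simp only [Finset.notMem_empty, iff_false]
  rw [mem_NSet_iff one_ne_zero]
  rintro ⟨P, hPm, hPi, hPd, rfl⟩
  exact hPi.not_isUnit (isUnit_of_dvd_one hPd)

lemma NSet_subset (hA : A ≠ 0) (hBA : B ∣ A) : NSet B ⊆ NSet A := by
  intro d hd
  have hB : B ≠ 0 := fun h => by simp [h, zero_dvd_iff] at hBA; exact hA hBA
  rw [mem_NSet_iff hB] at hd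
  rw [mem_NSet_iff hA]
  obtain ⟨P, h1, h2, h3, h4⟩ := hd
  exact ⟨P, h1, h2, h3.trans hBA, h4⟩

lemma exists_monic_irreducible_factor (hB : B.Monic) (hB1 : B ≠ 1) :
    ∃ P : Polynomial F, P.Monic ∧ Irreducible P ∧ P ∣ B := by
  have hu : ¬IsUnit B := by
    intro h
    exact hB1 (hB.eq_one_of_isUnit h)
  obtain ⟨P, hPi, hPd⟩ := WfDvdMonoid.exists_irreducible_factor hu hB.ne_zero
  refine ⟨normalize P, Polynomial.monic_normalize hPi.ne_zero, ?_, ?_⟩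
  · exact (associated_normalize P).irreducible hPi
  · exact (normalize_dvd_iff).mpr hPd

lemma NSet_nonempty (hB : B.Monic) (hB1 : B ≠ 1) : (NSet B).Nonempty := by
  obtain ⟨P, h1, h2, h3⟩ := exists_monic_irreducible_factor hB hB1
  exact ⟨P.natDegree, (mem_NSet_iff hB.ne_zero).mpr ⟨P, h1, h2, h3, rfl⟩⟩

lemma muFF_one : muFF (1 : Polynomial F) = 1 := by
  rw [muFF, if_pos squarefree_one]
  simp [UniqueFactorizationMonoid.normalizedFactors_one]

end Aux

section MnSec
open Finset

variable {F : Type} [Field F] [Fintype F]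

/-- All monic polynomials of given degree as a finset. -/
noncomputable def Mn (F : Type) [Field F] [Fintype F] (n : ℕ) : Finset (Polynomial F) :=
  (Finset.univ : Finset (Fin n → F)).image
    (fun c => Polynomial.X ^ n + ∑ i : Fin n, Polynomial.C (c i) * Polynomial.X ^ (i : ℕ))

lemma degree_aux (n : ℕ) (c : Fin n → F) :
    (∑ i : Fin n, Polynomial.C (c i) * Polynomial.X ^ (i : ℕ)).degree < ((n : ℕ) : WithBot ℕ) := by
  apply lt_of_le_of_lt (Polynomial.degree_sum_le _ _)
  rw [Finset.sup_lt_iff (by exact_mod_cast WithBot.bot_lt_coe n)]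
  intro i _
  refine lt_of_le_of_lt (Polynomial.degree_C_mul_X_pow_le _ _) ?_
  exact_mod_cast i.2

lemma coeff_aux (n : ℕ) (c : Fin n → F) (j : ℕ) :
    (∑ i : Fin n, Polynomial.C (c i) * Polynomial.X ^ (i : ℕ)).coeff j
      = if h : j < n then c ⟨j, h⟩ else 0 := by
  rw [Polynomial.finset_sum_coeff]
  simp only [Polynomial.coeff_C_mul, Polynomial.coeff_X_pow]
  split
  · next h =>
    rw [Finset.sum_eq_single (⟨j, h⟩ : Fin n)]
    · simp
    · intro b _ hb
      have : j ≠ (b : ℕ) := fun hh => hb (by ext; simp [← hh])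
      simp [this]
    · simp
  · next h =>
    apply Finset.sum_eq_zero
    intro i _
    have : j ≠ (i : ℕ) := by omega
    simp [this]

lemma mem_Mn {n : ℕ} {p : Polynomial F} :
    p ∈ Mn F n ↔ p.Monic ∧ p.natDegree = n := by
  constructor
  · rintro hp
    obtain ⟨c, -, rfl⟩ := Finset.mem_image.mp hp
    have hd := degree_aux n c
    have hm : (Polynomial.X ^ n + ∑ i : Fin n, Polynomial.C (c i) * Polynomial.X ^ (i : ℕ)).Monic :=
      Polynomial.monic_X_pow_add hd
    refine ⟨hm, ?_⟩
    have hdeg : (Polynomial.X ^ n + ∑ i : Fin n,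
        Polynomial.C (c i) * Polynomial.X ^ (i : ℕ)).degree = ((n : ℕ) : WithBot ℕ) := by
      rw [Polynomial.degree_add_eq_left_of_degree_lt (by rwa [Polynomial.degree_X_pow]),
        Polynomial.degree_X_pow]
    exact Polynomial.natDegree_eq_of_degree_eq_some hdeg
  · rintro ⟨hm, rfl⟩
    apply Finset.mem_image.mpr
    refine ⟨fun i => p.coeff (i : ℕ), Finset.mem_univ _, ?_⟩
    ext j
    rw [Polynomial.coeff_add, coeff_aux, Polynomial.coeff_X_pow]
    rcases lt_trichotomy j p.natDegree with h | h | h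
    · rw [if_neg (by omega), dif_pos h, zero_add]
    · subst h
      rw [if_pos rfl, dif_neg (by omega), add_zero, hm.coeff_natDegree]
    · rw [Polynomial.coeff_eq_zero_of_natDegree_lt h, if_neg (by omega), dif_neg (by omega),
        add_zero]

lemma card_Mn (n : ℕ) : (Mn F n).card = Fintype.card F ^ n := by
  rw [Mn, Finset.card_image_of_injective _ ?_, Finset.card_univ, Fintype.card_fun]
  · simp
  · intro c c' h
    have : ∀ j : ℕ, (h2 : j < n) → c ⟨j, h2⟩ = c' ⟨j, h2⟩ := by
      intro j hj
      have h2 := add_left_cancel h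
      have h3 := congrArg (fun p => Polynomial.coeff p j) h2
      simp only [coeff_aux, dif_pos hj] at h3
      exact h3
    funext i
    have := this i i.2
    simpa using this

lemma Mn_zero : Mn F 0 = {1} := by
  ext p
  rw [mem_Mn, Finset.mem_singleton]
  constructor
  · rintro ⟨hm, hd⟩; exact hm.natDegree_eq_zero.mp hd
  · rintro rfl; exact ⟨Polynomial.monic_one, Polynomial.natDegree_one⟩

end MnSec

section DvPSec
open UniqueFactorizationMonoid
set_option linter.unusedSectionVars false

variable {F : Type} [Field F] [Fintype F]
variable {A B C E : Polynomial F}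

/-- Divisor pairs of a monic polynomial. -/
noncomputable def DvP (A : Polynomial F) : Finset (Polynomial F × Polynomial F) :=
  ((((Finset.range (A.natDegree + 1)).biUnion (Mn F)) ×ˢ
    ((Finset.range (A.natDegree + 1)).biUnion (Mn F)))).filter
    (fun p => p.1 * p.2 = A)

lemma mem_DvP (hA : A.Monic) {p : Polynomial F × Polynomial F} :
    p ∈ DvP A ↔ p.1.Monic ∧ p.2.Monic ∧ p.1 * p.2 = A := by
  rw [DvP, Finset.mem_filter, Finset.mem_product]
  simp only [Finset.mem_biUnion, Finset.mem_range, mem_Mn]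
  constructor
  · rintro ⟨⟨⟨-, -, h1, -⟩, ⟨-, -, h2, -⟩⟩, h3⟩
    exact ⟨h1, h2, h3⟩
  · rintro ⟨h1, h2, h3⟩
    have hdeg : p.1.natDegree + p.2.natDegree = A.natDegree := by
      rw [← h3, h1.natDegree_mul h2]
    exact ⟨⟨⟨p.1.natDegree, by omega, h1, rfl⟩, ⟨p.2.natDegree, by omega, h2, rfl⟩⟩, h3⟩

lemma swap_mem_DvP (hA : A.Monic) {p : Polynomial F × Polynomial F} (h : p ∈ DvP A) :
    p.swap ∈ DvP A := by
  rw [mem_DvP hA] at h ⊢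
  exact ⟨h.2.1, h.1, by rw [mul_comm]; exact h.2.2⟩

/-- μ is multiplicative on products without common prime factors. -/
lemma muFF_mul (hB : B.Monic) (hC : C.Monic)
    (hcop : ∀ P : Polynomial F, Prime P → P ∣ B → ¬ P ∣ C) :
    muFF (B * C) = muFF B * muFF C := by
  have hB0 : B ≠ 0 := hB.ne_zero
  have hC0 : C ≠ 0 := hC.ne_zero
  have hBC0 : B * C ≠ 0 := mul_ne_zero hB0 hC0
  have hdisj : Disjoint (normalizedFactors B) (normalizedFactors C) := by
    rw [Multiset.disjoint_left]
    intro Q hQB hQC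
    exact hcop Q (prime_of_normalized_factor Q hQB) (dvd_of_mem_normalizedFactors hQB)
      (dvd_of_mem_normalizedFactors hQC)
  have hnf : normalizedFactors (B * C) = normalizedFactors B + normalizedFactors C :=
    normalizedFactors_mul hB0 hC0
  by_cases hsf : Squarefree (B * C)
  · have hsB : Squarefree B := hsf.squarefree_of_dvd ⟨C, rfl⟩
    have hsC : Squarefree C := hsf.squarefree_of_dvd ⟨B, mul_comm B C⟩
    rw [muFF, muFF, muFF, if_pos hsf, if_pos hsB, if_pos hsC, hnf, ← pow_add]
    congr 1
    rw [Multiset.toFinset_add, Finset.card_union_of_disjoint]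
    rw [Finset.disjoint_left]
    intro Q h1 h2
    exact (Multiset.disjoint_left.mp hdisj) (Multiset.mem_toFinset.mp h1)
      (Multiset.mem_toFinset.mp h2)
  · rw [muFF, if_neg hsf]
    by_cases hsB : Squarefree B
    · by_cases hsC : Squarefree C
      · exfalso
        apply hsf
        rw [squarefree_iff_nodup_normalizedFactors hBC0, hnf, Multiset.nodup_add]
        exact ⟨(squarefree_iff_nodup_normalizedFactors hB0).mp hsB,
          (squarefree_iff_nodup_normalizedFactors hC0).mp hsC, hdisj⟩
      · rw [muFF, muFF, if_neg hsC, mul_zero]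
    · rw [muFF, if_neg hsB, zero_mul]

/-- μ of a product of a nodup multiset of monic irreducibles. -/
lemma muFF_prod_nodup {s : Multiset (Polynomial F)} (hnd : s.Nodup)
    (hirr : ∀ Q ∈ s, Irreducible Q) (hmon : ∀ Q ∈ s, Polynomial.Monic Q) :
    muFF s.prod = (-1) ^ Multiset.card s := by
  have hnf : normalizedFactors s.prod = s := by
    rw [normalizedFactors_prod_eq s hirr]
    rw [Multiset.map_congr rfl (fun Q hQ => (hmon Q hQ).normalize_eq_self), Multiset.map_id']
  have h0 : s.prod ≠ 0 := by
    apply Multiset.prod_ne_zero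
    intro h
    exact (hirr 0 h).ne_zero rfl
  have hsf : Squarefree s.prod := by
    rw [squarefree_iff_nodup_normalizedFactors h0, hnf]; exact hnd
  rw [muFF, if_pos hsf, hnf, Multiset.toFinset_card_of_nodup hnd]

end DvPSec

section DeltaSec
open UniqueFactorizationMonoid
set_option linter.unusedSectionVars false

variable {F : Type} [Field F] [Fintype F]
variable {A B C E : Polynomial F}

lemma prod_monic {s : Multiset (Polynomial F)} (hmon : ∀ Q ∈ s, Polynomial.Monic Q) :
    s.prod.Monic := by
  simpa using Polynomial.monic_multiset_prod_of_monic _ id hmon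

lemma nf_prod_eq {s : Multiset (Polynomial F)} (hirr : ∀ Q ∈ s, Irreducible Q)
    (hmon : ∀ Q ∈ s, Polynomial.Monic Q) :
    normalizedFactors s.prod = s := by
  rw [normalizedFactors_prod_eq s hirr,
    Multiset.map_congr rfl (fun Q hQ => (hmon Q hQ).normalize_eq_self), Multiset.map_id']

lemma nf_eq_zero_iff (hE : E.Monic) : normalizedFactors E = 0 ↔ E = 1 := by
  constructor
  · intro h
    have := prod_nf hE
    rw [h, Multiset.prod_zero] at this
    exact this.symm
  · rintro rfl
    exact normalizedFactors_one

/-- The Möbius delta identity over divisor pairs. -/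
lemma sum_DvP_muFF (hE : E.Monic) :
    ∑ p ∈ DvP E, muFF p.2 = if E = 1 then 1 else 0 := by
  have hE0 : E ≠ 0 := hE.ne_zero
  have key : ∑ p ∈ DvP E, muFF p.2
      = ∑ p ∈ (DvP E).filter (fun p => Squarefree p.2), muFF p.2 := by
    rw [Finset.sum_filter_of_ne]
    intro p _ h
    by_contra hsf
    exact h (by rw [muFF, if_neg hsf])
  rw [key]
  have bij : ∑ p ∈ (DvP E).filter (fun p => Squarefree p.2), muFF p.2
      = ∑ S ∈ (normalizedFactors E).toFinset.powerset, ((-1 : ℤ)) ^ S.card := by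
    refine Finset.sum_nbij' (fun p => (normalizedFactors p.2).toFinset)
      (fun S => ((normalizedFactors E - S.val).prod, S.val.prod)) ?_ ?_ ?_ ?_ ?_
    · -- maps into powerset
      intro p hp
      rw [Finset.mem_filter, mem_DvP hE] at hp
      obtain ⟨⟨h1, h2, h3⟩, hsf⟩ := hp
      rw [Finset.mem_powerset]
      intro Q hQ
      rw [Multiset.mem_toFinset] at hQ ⊢
      apply Multiset.mem_of_le ?_ hQ
      rw [← dvd_iff_normalizedFactors_le_normalizedFactors h2.ne_zero hE0]
      exact ⟨p.1, by rw [mul_comm]; exact h3.symm⟩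
    · -- maps into filter
      intro S hS
      rw [Finset.mem_powerset] at hS
      have hle : (S.val : Multiset (Polynomial F)) ≤ normalizedFactors E := by
        rw [Multiset.le_iff_count]
        intro Q
        by_cases h : Q ∈ S
        · have h1 : Multiset.count Q S.val = 1 := Multiset.count_eq_one_of_mem S.nodup h
          have h2 : Q ∈ normalizedFactors E := Multiset.mem_toFinset.mp (hS h)
          rw [h1]
          exact Multiset.one_le_count_iff_mem.mpr h2
        · rw [Multiset.count_eq_zero_of_notMem (fun hh => h hh)]
          omega
      have hmonE : ∀ Q ∈ normalizedFactors E, Polynomial.Monic Q := fun Q hQ => mem_nf_monic hQ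
      have hm1 : ((normalizedFactors E - S.val).prod).Monic :=
        prod_monic (fun Q hQ => hmonE Q (Multiset.mem_of_le tsub_le_self hQ))
      have hm2 : (S.val.prod).Monic :=
        prod_monic (fun Q hQ => hmonE Q (Multiset.mem_of_le hle hQ))
      rw [Finset.mem_filter, mem_DvP hE]
      refine ⟨⟨hm1, hm2, ?_⟩, ?_⟩
      · rw [← Multiset.prod_add, tsub_add_cancel_of_le hle]
        exact prod_nf hE
      · have hnd : (S.val : Multiset (Polynomial F)).Nodup := S.nodup
        have hirr : ∀ Q ∈ (S.val : Multiset (Polynomial F)), Irreducible Q := fun Q hQ =>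
          irreducible_of_normalized_factor Q (Multiset.mem_of_le hle hQ)
        have h0 : (S.val : Multiset (Polynomial F)).prod ≠ 0 := hm2.ne_zero
        rw [squarefree_iff_nodup_normalizedFactors h0,
          nf_prod_eq hirr (fun Q hQ => hmonE Q (Multiset.mem_of_le hle hQ))]
        exact hnd
    · -- left inverse
      intro p hp
      rw [Finset.mem_filter, mem_DvP hE] at hp
      obtain ⟨⟨h1, h2, h3⟩, hsf⟩ := hp
      have hnd : (normalizedFactors p.2).Nodup :=
        (squarefree_iff_nodup_normalizedFactors h2.ne_zero).mp hsf
      have hval : ((normalizedFactors p.2).toFinset.val) = normalizedFactors p.2 :=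
        Multiset.dedup_eq_self.mpr hnd
      have hnfmul : normalizedFactors E = normalizedFactors p.1 + normalizedFactors p.2 := by
        rw [← h3]; exact normalizedFactors_mul h1.ne_zero h2.ne_zero
      have e2 : ((normalizedFactors p.2).toFinset.val).prod = p.2 := by
        rw [hval]; exact prod_nf h2
      have e1 : (normalizedFactors E - (normalizedFactors p.2).toFinset.val).prod = p.1 := by
        rw [hval, hnfmul, add_tsub_cancel_right]
        exact prod_nf h1
      exact Prod.ext e1 e2
    · -- right inverse
      intro S hS
      rw [Finset.mem_powerset] at hS
      have hle : (S.val : Multiset (Polynomial F)) ≤ normalizedFactors E := by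
        rw [Multiset.le_iff_count]
        intro Q
        by_cases h : Q ∈ S
        · rw [Multiset.count_eq_one_of_mem S.nodup h]
          exact Multiset.one_le_count_iff_mem.mpr (Multiset.mem_toFinset.mp (hS h))
        · rw [Multiset.count_eq_zero_of_notMem (fun hh => h hh)]
          omega
      have hmonE : ∀ Q ∈ normalizedFactors E, Polynomial.Monic Q := fun Q hQ => mem_nf_monic hQ
      have : normalizedFactors (S.val.prod) = S.val :=
        nf_prod_eq (fun Q hQ => irreducible_of_normalized_factor Q (Multiset.mem_of_le hle hQ))
          (fun Q hQ => hmonE Q (Multiset.mem_of_le hle hQ))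
      show (normalizedFactors (S.val.prod)).toFinset = S
      rw [this]
      exact Finset.ext (fun a => by simp [Multiset.mem_toFinset])
    · -- values
      intro p hp
      rw [Finset.mem_filter, mem_DvP hE] at hp
      obtain ⟨⟨h1, h2, h3⟩, hsf⟩ := hp
      rw [muFF, if_pos hsf]
  rw [bij, Finset.sum_powerset_neg_one_pow_card]
  by_cases h1 : E = 1
  · rw [if_pos h1, if_pos (by rw [h1]; simp [normalizedFactors_one])]
  · rw [if_neg h1, if_neg ?_]
    intro hh
    rw [Multiset.toFinset_eq_empty] at hh
    exact h1 ((nf_eq_zero_iff hE).mp hh)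

end DeltaSec

section PerASec
open UniqueFactorizationMonoid
set_option linter.unusedSectionVars false

variable {F : Type} [Field F] [Fintype F]
variable {A B C E P : Polynomial F} {d : ℕ}

/-- The degree-`d` part of `A` (product of all prime factors of degree `d`, with multiplicity). -/
noncomputable def Apart (A : Polynomial F) (d : ℕ) : Polynomial F :=
  ((normalizedFactors A).filter (fun Q => Q.natDegree = d)).prod

/-- The complementary part. -/
noncomputable def Acop (A : Polynomial F) (d : ℕ) : Polynomial F :=
  ((normalizedFactors A).filter (fun Q => ¬ Q.natDegree = d)).prod

lemma Apart_monic (A : Polynomial F) (d : ℕ) : (Apart A d).Monic :=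
  prod_monic fun Q hQ => mem_nf_monic (Multiset.mem_of_le (Multiset.filter_le _ _) hQ)

lemma Acop_monic (A : Polynomial F) (d : ℕ) : (Acop A d).Monic :=
  prod_monic fun Q hQ => mem_nf_monic (Multiset.mem_of_le (Multiset.filter_le _ _) hQ)

lemma Apart_mul_Acop (hA : A.Monic) (d : ℕ) : Apart A d * Acop A d = A := by
  rw [Apart, Acop, ← Multiset.prod_add, Multiset.filter_add_not]
  exact prod_nf hA

lemma natDegree_eq_of_prime_dvd_Apart (hP : Prime P) (h : P ∣ Apart A d) :
    P.natDegree = d := by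
  obtain ⟨Q, hQ, hPQ⟩ := hP.exists_mem_multiset_dvd h
  rw [Multiset.mem_filter] at hQ
  have hass : Associated P Q :=
    hP.irreducible.associated_of_dvd (irreducible_of_normalized_factor Q hQ.1) hPQ
  rw [← hQ.2]
  exact Polynomial.natDegree_eq_of_degree_eq (Polynomial.degree_eq_degree_of_associated hass)

lemma natDegree_ne_of_prime_dvd_Acop (hP : Prime P) (h : P ∣ Acop A d) :
    P.natDegree ≠ d := by
  obtain ⟨Q, hQ, hPQ⟩ := hP.exists_mem_multiset_dvd h
  rw [Multiset.mem_filter] at hQ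
  have hass : Associated P Q :=
    hP.irreducible.associated_of_dvd (irreducible_of_normalized_factor Q hQ.1) hPQ
  rw [Polynomial.natDegree_eq_of_degree_eq (Polynomial.degree_eq_degree_of_associated hass)]
  exact hQ.2

lemma dvd_Apart_of_NSet_singleton (hA : A.Monic) (hB : B.Monic) (hBA : B ∣ A)
    (hNB : NSet B = {d}) : B ∣ Apart A d := by
  have hB0 : B ≠ 0 := hB.ne_zero
  have hle : normalizedFactors B ≤ (normalizedFactors A).filter (fun Q => Q.natDegree = d) := by
    rw [Multiset.le_filter]
    constructor
    · exact (dvd_iff_normalizedFactors_le_normalizedFactors hB0 hA.ne_zero).mp hBA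
    · intro Q hQ
      have : Q.natDegree ∈ NSet B := by
        rw [mem_NSet_iff hB0]
        exact ⟨Q, mem_nf_monic hQ, irreducible_of_normalized_factor Q hQ,
          dvd_of_mem_normalizedFactors hQ, rfl⟩
      rw [hNB, Finset.mem_singleton] at this
      exact this
  calc B = (normalizedFactors B).prod := (prod_nf hB).symm
    _ ∣ _ := Multiset.prod_dvd_prod_of_le hle

lemma NSet_singleton_of_dvd_Apart (hB : B.Monic) (hB1 : B ≠ 1) (h : B ∣ Apart A d) :
    NSet B = {d} := by
  have hsub : NSet B ⊆ {d} := by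
    intro e he
    rw [mem_NSet_iff hB.ne_zero] at he
    obtain ⟨P, hPm, hPi, hPd, rfl⟩ := he
    rw [Finset.mem_singleton]
    exact natDegree_eq_of_prime_dvd_Apart (hPi.prime) (hPd.trans h)
  rcases Finset.subset_singleton_iff.mp hsub with h1 | h1
  · exact absurd h1 (Finset.nonempty_iff_ne_empty.mp (NSet_nonempty hB hB1))
  · exact h1

lemma NSet_of_irreducible (hP : P.Monic) (hPi : Irreducible P) :
    NSet P = {P.natDegree} := by
  apply Finset.eq_singleton_iff_unique_mem.mpr
  constructor
  · rw [mem_NSet_iff hP.ne_zero]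
    exact ⟨P, hP, hPi, dvd_rfl, rfl⟩
  · intro e he
    rw [mem_NSet_iff hP.ne_zero] at he
    obtain ⟨Q, hQm, hQi, hQd, rfl⟩ := he
    have hass : Associated Q P := hQi.associated_of_dvd hPi hQd
    exact Polynomial.natDegree_eq_of_degree_eq (Polynomial.degree_eq_degree_of_associated hass)

lemma Apart_ne_one (hA : A.Monic) (hd : d ∈ NSet A) : Apart A d ≠ 1 := by
  rw [mem_NSet_iff hA.ne_zero] at hd
  obtain ⟨P, hPm, hPi, hPd, rfl⟩ := hd
  have : P ∣ Apart A P.natDegree :=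
    dvd_Apart_of_NSet_singleton hA hPm hPd (NSet_of_irreducible hPm hPi)
  intro h1
  rw [h1] at this
  exact hPi.not_isUnit (isUnit_of_dvd_one this)

lemma muFF_Apart_mul_Acop (hA : A.Monic) (d : ℕ) :
    muFF A = muFF (Apart A d) * muFF (Acop A d) := by
  conv_lhs => rw [← Apart_mul_Acop hA d]
  apply muFF_mul (Apart_monic A d) (Acop_monic A d)
  intro P hP h1 h2
  exact natDegree_ne_of_prime_dvd_Acop hP h2 (natDegree_eq_of_prime_dvd_Apart hP h1)

lemma filter_fst_eq_one (hE : E.Monic) :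
    (DvP E).filter (fun p => p.1 = 1) = {(1, E)} := by
  ext p
  rw [Finset.mem_filter, mem_DvP hE, Finset.mem_singleton]
  constructor
  · rintro ⟨⟨h1, h2, h3⟩, h4⟩
    have : p.2 = E := by rw [← h3, h4, one_mul]
    exact Prod.ext h4 this
  · rintro rfl
    exact ⟨⟨Polynomial.monic_one, hE, one_mul E⟩, rfl⟩

lemma sum_DvP_ne_one (hE : E.Monic) (hE1 : E ≠ 1) :
    ∑ p ∈ (DvP E).filter (fun p => ¬ p.1 = 1), muFF p.2 = -muFF E := by
  have h := Finset.sum_filter_add_sum_filter_not (DvP E) (fun p => p.1 = 1)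
    (fun p => muFF p.2)
  rw [filter_fst_eq_one hE] at h
  have h2 : ∑ p ∈ ({((1 : Polynomial F), E)} : Finset (Polynomial F × Polynomial F)),
      muFF p.2 = muFF E := by simp
  rw [h2] at h
  have h3 := sum_DvP_muFF hE
  rw [if_neg hE1] at h3
  omega

/-- Per-polynomial identity: `μ(A)·Ω(A) = -∑_{BC=A, Ω(B)=1} μ(C)`. -/
lemma perA (hA : A.Monic) :
    muFF A * (OmegaFF A : ℤ) = -∑ p ∈ DvP A, (if OmegaFF p.1 = 1 then muFF p.2 else 0) := by
  have hA0 : A ≠ 0 := hA.ne_zero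
  -- rewrite the summand as a sum of indicators over d ∈ NSet A
  have step1 : ∀ p ∈ DvP A, (if OmegaFF p.1 = 1 then muFF p.2 else 0)
      = ∑ d ∈ NSet A, (if NSet p.1 = {d} then muFF p.2 else 0) := by
    intro p hp
    rw [mem_DvP hA] at hp
    obtain ⟨h1, h2, h3⟩ := hp
    by_cases hΩ : OmegaFF p.1 = 1
    · obtain ⟨d0, hd0⟩ := Finset.card_eq_one.mp hΩ
      have hd0A : d0 ∈ NSet A := by
        apply NSet_subset hA0 ⟨p.2, h3.symm⟩
        rw [hd0]; exact Finset.mem_singleton_self d0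
      rw [if_pos hΩ, Finset.sum_eq_single d0]
      · rw [if_pos hd0]
      · intro e he hne
        rw [if_neg]
        rw [hd0]
        intro hh
        exact hne (Finset.singleton_injective hh).symm
      · intro h; exact absurd hd0A h
    · rw [if_neg hΩ]
      apply (Finset.sum_eq_zero _).symm
      intro e he
      rw [if_neg]
      intro hh
      exact hΩ (by rw [OmegaFF, hh, Finset.card_singleton])
  rw [Finset.sum_congr rfl step1, Finset.sum_comm]
  -- inner sum for each d
  have step2 : ∀ d ∈ NSet A,
      ∑ p ∈ DvP A, (if NSet p.1 = {d} then muFF p.2 else 0) = -muFF A := by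
    intro d hd
    rw [← Finset.sum_filter]
    set E := Apart A d with hEdef
    have hEm : E.Monic := Apart_monic A d
    have hE1 : E ≠ 1 := Apart_ne_one hA hd
    have hbij : ∑ p ∈ (DvP A).filter (fun p => NSet p.1 = {d}), muFF p.2
        = ∑ p ∈ (DvP E).filter (fun p => ¬ p.1 = 1), muFF p.2 * muFF (Acop A d) := by
      refine (Finset.sum_bij (fun p _ => (p.1, p.2 * Acop A d)) ?_ ?_ ?_ ?_).symm
      · -- maps into target
        intro p hp
        rw [Finset.mem_filter, mem_DvP hEm] at hp
        obtain ⟨⟨h1, h2, h3⟩, h4⟩ := hp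
        rw [Finset.mem_filter, mem_DvP hA]
        refine ⟨⟨h1, h2.mul (Acop_monic A d), ?_⟩, ?_⟩
        · rw [← mul_assoc, h3, Apart_mul_Acop hA]
        · exact NSet_singleton_of_dvd_Apart h1 h4 ⟨p.2, h3.symm⟩
      · -- injective
        intro p hp p' hp' heq
        rw [Finset.mem_filter, mem_DvP hEm] at hp hp'
        have heq' : (p.1, p.2 * Acop A d) = (p'.1, p'.2 * Acop A d) := heq
        rw [Prod.mk.injEq] at heq'
        obtain ⟨h1, h2⟩ := heq'
        have h3 : p.2 = p'.2 := mul_right_cancel₀ (Acop_monic A d).ne_zero h2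
        exact Prod.ext h1 h3
      · -- surjective
        intro p hp
        rw [Finset.mem_filter, mem_DvP hA] at hp
        obtain ⟨⟨h1, h2, h3⟩, h4⟩ := hp
        have hBE : p.1 ∣ E := dvd_Apart_of_NSet_singleton hA h1 ⟨p.2, h3.symm⟩ h4
        obtain ⟨B', hB'⟩ := hBE
        have hB'm : B'.Monic := h1.of_mul_monic_left (hB' ▸ hEm)
        have hne1 : p.1 ≠ 1 := by
          intro hh
          rw [hh, NSet_one] at h4
          exact absurd h4.symm (Finset.singleton_ne_empty d)
        refine ⟨(p.1, B'), ?_, ?_⟩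
        · rw [Finset.mem_filter, mem_DvP hEm]
          exact ⟨⟨h1, hB'm, hB'.symm⟩, hne1⟩
        · have : p.1 * (B' * Acop A d) = p.1 * p.2 := by
            rw [← mul_assoc, ← hB', hEdef, Apart_mul_Acop hA, h3]
          have h5 : B' * Acop A d = p.2 := mul_left_cancel₀ h1.ne_zero this
          exact Prod.ext rfl h5
      · -- values
        intro p hp
        rw [Finset.mem_filter, mem_DvP hEm] at hp
        obtain ⟨⟨h1, h2, h3⟩, h4⟩ := hp
        show muFF p.2 * muFF (Acop A d) = muFF (p.2 * Acop A d)
        symm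
        apply muFF_mul h2 (Acop_monic A d)
        intro P hP hdvd1 hdvd2
        exact natDegree_ne_of_prime_dvd_Acop hP hdvd2
          (natDegree_eq_of_prime_dvd_Apart hP (hdvd1.trans ⟨p.1, by rw [mul_comm]; exact h3.symm⟩))
    rw [hbij, ← Finset.sum_mul, sum_DvP_ne_one hEm hE1, muFF_Apart_mul_Acop hA d]
    ring
  rw [Finset.sum_congr rfl step2, Finset.sum_const, OmegaFF]
  push_cast
  ring
end PerASec

section ConvSec
open Finset
set_option linter.unusedSectionVars false

variable {F : Type} [Field F] [Fintype F]

lemma one_not_mem_Mn {n : ℕ} (hn : 1 ≤ n) {A : Polynomial F} (hA : A ∈ Mn F n) : A ≠ 1 := by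
  rintro rfl
  rw [mem_Mn] at hA
  rw [Polynomial.natDegree_one] at hA
  omega

set_option maxHeartbeats 1000000 in
/-- Reindexing a sum over divisor pairs. -/
lemma reindex {M : Type} [AddCommMonoid M] (n : ℕ) (f : Polynomial F → Polynomial F → M) :
    ∑ A ∈ Mn F n, ∑ p ∈ DvP A, f p.1 p.2
      = ∑ b ∈ Finset.range (n + 1), ∑ B ∈ Mn F b, ∑ C ∈ Mn F (n - b), f B C := by
  have hR : ∀ b, ∑ B ∈ Mn F b, ∑ C ∈ Mn F (n - b), f B C
      = ∑ p ∈ (Mn F b) ×ˢ (Mn F (n - b)), f p.1 p.2 := by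
    intro b
    rw [Finset.sum_product]
  have L : ∑ x ∈ (Mn F n).sigma (fun _ => DvP _), (fun x => f x.2.1 x.2.2) x
      = ∑ A ∈ Mn F n, ∑ p ∈ DvP A, f p.1 p.2 := Finset.sum_sigma _ _ _
  have R : ∑ x ∈ (Finset.range (n + 1)).sigma (fun b => (Mn F b) ×ˢ (Mn F (n - b))),
        (fun x => f x.2.1 x.2.2) x
      = ∑ b ∈ Finset.range (n + 1), ∑ p ∈ (Mn F b) ×ˢ (Mn F (n - b)), f p.1 p.2 :=
    Finset.sum_sigma _ _ _
  rw [Finset.sum_congr rfl (fun b _ => hR b), ← L, ← R]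
  refine Finset.sum_nbij' (fun x => ⟨x.2.1.natDegree, x.2⟩) (fun y => ⟨y.2.1 * y.2.2, y.2⟩)
    ?_ ?_ ?_ ?_ ?_
  · intro x hx
    rw [Finset.mem_sigma] at hx
    obtain ⟨hA, hp⟩ := hx
    rw [mem_Mn] at hA
    rw [mem_DvP hA.1] at hp
    obtain ⟨h1, h2, h3⟩ := hp
    have hdeg : x.2.1.natDegree + x.2.2.natDegree = n := by
      rw [← hA.2, ← h3, h1.natDegree_mul h2]
    simp only [Finset.mem_sigma, Finset.mem_range, Finset.mem_product, mem_Mn]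
    refine ⟨by omega, ⟨h1, ?_⟩, ⟨h2, ?_⟩⟩ <;> first | trivial | omega
  · intro y hy
    rw [Finset.mem_sigma, Finset.mem_range, Finset.mem_product, mem_Mn, mem_Mn] at hy
    obtain ⟨hb, ⟨h1, h1d⟩, ⟨h2, h2d⟩⟩ := hy
    have hm : (y.2.1 * y.2.2).Monic := h1.mul h2
    simp only [Finset.mem_sigma, mem_Mn, mem_DvP hm]
    refine ⟨⟨hm, ?_⟩, h1, h2, trivial⟩
    rw [h1.natDegree_mul h2, h1d, h2d]
    omega
  · intro x hx
    rw [Finset.mem_sigma] at hx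
    obtain ⟨hA, hp⟩ := hx
    rw [mem_Mn] at hA
    rw [mem_DvP hA.1] at hp
    exact Sigma.ext hp.2.2 (heq_of_eq rfl)
  · intro y hy
    rw [Finset.mem_sigma, Finset.mem_range, Finset.mem_product, mem_Mn, mem_Mn] at hy
    exact Sigma.ext hy.2.1.2 (heq_of_eq rfl)
  · intro x hx
    rfl

/-- Sum of μ over monic polynomials of degree `n`. -/
noncomputable def Mval (F : Type) [Field F] [Fintype F] (n : ℕ) : ℤ :=
  ∑ B ∈ Mn F n, muFF B

lemma Mval_zero : Mval F 0 = 1 := by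
  rw [Mval, Mn_zero, Finset.sum_singleton, muFF_one]

lemma Mval_conv {n : ℕ} (hn : 1 ≤ n) :
    ∑ b ∈ Finset.range (n + 1), ((Fintype.card F : ℤ)) ^ b * Mval F (n - b) = 0 := by
  have h := reindex (F := F) n (fun _ C => muFF C)
  have hz : ∑ A ∈ Mn F n, ∑ p ∈ DvP A, muFF p.2 = 0 := by
    apply Finset.sum_eq_zero
    intro A hA
    rw [sum_DvP_muFF (mem_Mn.mp hA).1, if_neg (one_not_mem_Mn hn hA)]
  rw [hz] at h
  have h2 : ∀ b ∈ Finset.range (n + 1), ∑ B ∈ Mn F b, ∑ C ∈ Mn F (n - b), muFF C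
      = ((Fintype.card F : ℤ)) ^ b * Mval F (n - b) := by
    intro b _
    rw [Finset.sum_const, card_Mn, nsmul_eq_mul, Mval]
    push_cast
    ring
  rw [Finset.sum_congr rfl h2] at h
  exact h.symm

lemma Mval_eq (n : ℕ) :
    Mval F n = if n = 0 then 1 else if n = 1 then -(Fintype.card F : ℤ) else 0 := by
  induction n using Nat.strong_induction_on with
  | _ n ih =>
    match n with
    | 0 => simpa using Mval_zero
    | 1 =>
      have h := Mval_conv (F := F) (n := 1) le_rfl
      rw [Finset.sum_range_succ, Finset.sum_range_succ, Finset.sum_range_zero] at h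
      simp only [pow_zero, one_mul, Nat.sub_self, pow_one, Nat.sub_zero] at h
      rw [Mval_zero, mul_one] at h
      have hgoal : Mval F 1 = -(Fintype.card F : ℤ) := by linarith
      simpa using hgoal
    | (m+2) =>
      have h := Mval_conv (F := F) (n := m + 2) (by omega)
      set n := m + 2 with hn
      have hsub : ({0, n-1, n} : Finset ℕ) ⊆ Finset.range (n+1) := by
        intro b hb
        simp only [Finset.mem_insert, Finset.mem_singleton] at hb
        rw [Finset.mem_range]
        omega
      have hvan : ∀ b ∈ Finset.range (n+1), b ∉ ({0, n-1, n} : Finset ℕ) →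
          ((Fintype.card F : ℤ)) ^ b * Mval F (n - b) = 0 := by
        intro b hb hb2
        simp only [Finset.mem_insert, Finset.mem_singleton, not_or] at hb2
        rw [Finset.mem_range] at hb
        have h1 : n - b < n := by omega
        rw [ih (n - b) h1, if_neg (by omega), if_neg (by omega), mul_zero]
      rw [← Finset.sum_subset hsub (fun b hb hb2 => hvan b hb hb2)] at h
      have hne1 : (0 : ℕ) ∉ ({n-1, n} : Finset ℕ) := by
        simp only [Finset.mem_insert, Finset.mem_singleton]
        omega
      have hne2 : (n-1 : ℕ) ∉ ({n} : Finset ℕ) := by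
        simp only [Finset.mem_singleton]
        omega
      rw [Finset.sum_insert hne1, Finset.sum_insert hne2, Finset.sum_singleton] at h
      rw [pow_zero, one_mul, Nat.sub_self, Mval_zero, mul_one,
        (by omega : n - (n - 1) = 1), ih 1 (by omega), if_neg one_ne_zero, if_pos rfl] at h
      have hq : ((Fintype.card F : ℤ)) ^ (n - 1) * (-(Fintype.card F : ℤ))
          = -((Fintype.card F : ℤ)) ^ n := by
        rw [mul_neg, ← pow_succ, (by omega : n - 1 + 1 = n)]
      rw [hq, Nat.sub_zero] at h
      rw [if_neg (by omega), if_neg (by omega)]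
      linarith

/-- The number of monic polynomials of degree `n` with `Ω = 1`. -/
noncomputable def Wnum (F : Type) [Field F] [Fintype F] (n : ℕ) : ℕ :=
  ((Mn F n).filter (fun B => OmegaFF B = 1)).card

lemma Wnum_zero : Wnum F 0 = 0 := by
  rw [Wnum, Mn_zero]
  rw [Finset.card_eq_zero, Finset.filter_eq_empty_iff]
  intro B hB
  rw [Finset.mem_singleton] at hB
  rw [hB, OmegaFF, NSet_one]
  simp

/-- The degree-`n` sum of `μ(A)·Ω(A)`. -/
lemma Sn_eq {n : ℕ} (hn : 1 ≤ n) :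
    ∑ A ∈ Mn F n, muFF A * (OmegaFF A : ℤ)
      = (Fintype.card F : ℤ) * (Wnum F (n-1) : ℤ) - (Wnum F n : ℤ) := by
  have hper : ∀ A ∈ Mn F n, muFF A * (OmegaFF A : ℤ)
      = -∑ p ∈ DvP A, (if OmegaFF p.1 = 1 then muFF p.2 else 0) := fun A hA =>
    perA (mem_Mn.mp hA).1
  rw [Finset.sum_congr rfl hper, Finset.sum_neg_distrib, reindex (F := F) n
    (fun B C => if OmegaFF B = 1 then muFF C else 0)]
  have h3 : ∀ b ∈ Finset.range (n+1), (∑ B ∈ Mn F b, ∑ C ∈ Mn F (n-b),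
      (if OmegaFF B = 1 then muFF C else 0)) = (Wnum F b : ℤ) * Mval F (n-b) := by
    intro b _
    have hin : ∀ B ∈ Mn F b, (∑ C ∈ Mn F (n-b), if OmegaFF B = 1 then muFF C else 0)
        = if OmegaFF B = 1 then Mval F (n-b) else 0 := by
      intro B _
      by_cases hB : OmegaFF B = 1
      · rw [if_pos hB, Mval]
        exact Finset.sum_congr rfl (fun C _ => if_pos hB)
      · rw [if_neg hB]
        exact Finset.sum_eq_zero (fun C _ => if_neg hB)
    rw [Finset.sum_congr rfl hin, ← Finset.sum_filter, Finset.sum_const, nsmul_eq_mul, Wnum]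
  rw [Finset.sum_congr rfl h3]
  have hsub : ({n-1, n} : Finset ℕ) ⊆ Finset.range (n+1) := by
    intro b hb
    simp only [Finset.mem_insert, Finset.mem_singleton] at hb
    rw [Finset.mem_range]
    omega
  have hvan : ∀ b ∈ Finset.range (n+1), b ∉ ({n-1, n} : Finset ℕ) →
      (Wnum F b : ℤ) * Mval F (n-b) = 0 := by
    intro b hb hb2
    simp only [Finset.mem_insert, Finset.mem_singleton, not_or] at hb2
    rw [Finset.mem_range] at hb
    rw [Mval_eq (n-b), if_neg (by omega), if_neg (by omega), mul_zero]
  have hne : (n-1 : ℕ) ∉ ({n} : Finset ℕ) := by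
    rw [Finset.mem_singleton]
    omega
  rw [← Finset.sum_subset hsub hvan, Finset.sum_insert hne, Finset.sum_singleton,
    (by omega : n - (n-1) = 1), Nat.sub_self, Mval_zero, Mval_eq 1,
    if_neg one_ne_zero, if_pos rfl]
  ring

end ConvSec

section FinalSec
open Finset
set_option linter.unusedSectionVars false

variable {F : Type} [Field F] [Fintype F]

lemma q_pos : 0 < (Fintype.card F : ℝ) := by
  have : 0 < Fintype.card F := Fintype.card_pos
  exact_mod_cast this

theorem stmt8' (x : ℕ) (hx : 0 < x) :
    ∑ᶠ A ∈ {A : Polynomial F | A.Monic ∧ 1 ≤ A.natDegree ∧ A.natDegree ≤ x},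
        (muFF A : ℝ) * (OmegaFF A : ℝ) / (Fintype.card F : ℝ) ^ A.natDegree
      = -(({B : Polynomial F | B.Monic ∧ B.natDegree = x ∧ OmegaFF B = 1}.ncard : ℝ) /
          (Fintype.card F : ℝ) ^ x) := by
  have hq0 : (Fintype.card F : ℝ) ≠ 0 := ne_of_gt q_pos
  -- identify the two sets with finsets
  have hset : {A : Polynomial F | A.Monic ∧ 1 ≤ A.natDegree ∧ A.natDegree ≤ x}
      = ((Finset.Icc 1 x).biUnion (Mn F) : Finset (Polynomial F)) := by
    ext A
    simp only [Set.mem_setOf_eq, Finset.coe_biUnion, Set.mem_iUnion, Finset.mem_coe,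
      Finset.mem_biUnion, Finset.mem_Icc, mem_Mn]
    constructor
    · rintro ⟨h1, h2, h3⟩
      exact ⟨A.natDegree, ⟨h2, h3⟩, h1, rfl⟩
    · rintro ⟨n, ⟨h2, h3⟩, h1, rfl⟩
      exact ⟨h1, h2, h3⟩
  have hset2 : {B : Polynomial F | B.Monic ∧ B.natDegree = x ∧ OmegaFF B = 1}
      = (((Mn F x).filter (fun B => OmegaFF B = 1)) : Finset (Polynomial F)) := by
    ext B
    simp only [Set.mem_setOf_eq, Finset.coe_filter, Finset.mem_coe, Finset.mem_filter, mem_Mn]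
    tauto
  rw [hset, hset2, finsum_mem_coe_finset, Set.ncard_coe_finset]
  have hdisj : ∀ n ∈ Finset.Icc 1 x, ∀ m ∈ Finset.Icc 1 x, n ≠ m →
      Disjoint (Mn F n) (Mn F m) := by
    intro n _ m _ hnm
    rw [Finset.disjoint_left]
    intro A hA hA2
    rw [mem_Mn] at hA hA2
    omega
  rw [Finset.sum_biUnion hdisj]
  have hterm : ∀ n ∈ Finset.Icc 1 x,
      ∑ A ∈ Mn F n, (muFF A : ℝ) * (OmegaFF A : ℝ) / (Fintype.card F : ℝ) ^ A.natDegree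
      = (Fintype.card F : ℝ) * (Wnum F (n-1) : ℝ) / (Fintype.card F : ℝ) ^ n
        - (Wnum F n : ℝ) / (Fintype.card F : ℝ) ^ n := by
    intro n hn
    rw [Finset.mem_Icc] at hn
    have hcast : ∑ A ∈ Mn F n, (muFF A : ℝ) * (OmegaFF A : ℝ) / (Fintype.card F : ℝ) ^ A.natDegree
        = ((∑ A ∈ Mn F n, muFF A * (OmegaFF A : ℤ) : ℤ) : ℝ) / (Fintype.card F : ℝ) ^ n := by
      push_cast
      rw [Finset.sum_div]
      apply Finset.sum_congr rfl
      intro A hA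
      rw [(mem_Mn.mp hA).2]
    rw [hcast, Sn_eq hn.1]
    push_cast
    ring
  rw [Finset.sum_congr rfl hterm]
  -- telescoping
  have hstep : ∀ n ∈ Finset.Icc 1 x,
      ((Fintype.card F : ℝ) * (Wnum F (n-1) : ℝ) / (Fintype.card F : ℝ) ^ n
        - (Wnum F n : ℝ) / (Fintype.card F : ℝ) ^ n)
      = (Wnum F (n-1) : ℝ) / (Fintype.card F : ℝ) ^ (n-1)
        - (Wnum F n : ℝ) / (Fintype.card F : ℝ) ^ n := by
    intro n hn
    rw [Finset.mem_Icc] at hn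
    congr 1
    rw [(by omega : n = (n-1) + 1), pow_succ, Nat.add_sub_cancel]
    have : (Fintype.card F : ℝ) ^ (n-1) ≠ 0 := pow_ne_zero _ hq0
    field_simp
  rw [Finset.sum_congr rfl hstep]
  have htel : ∑ n ∈ Finset.Icc 1 x, ((Wnum F (n-1) : ℝ) / (Fintype.card F : ℝ) ^ (n-1)
        - (Wnum F n : ℝ) / (Fintype.card F : ℝ) ^ n)
      = (Wnum F 0 : ℝ) / (Fintype.card F : ℝ) ^ 0 - (Wnum F x : ℝ) / (Fintype.card F : ℝ) ^ x := by
    rw [← Finset.Ico_add_one_right_eq_Icc, Finset.sum_Ico_eq_sum_range]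
    simp only [Nat.add_sub_cancel_left, Nat.succ_sub_one, Nat.add_comm 1, Nat.add_sub_cancel]
    rw [Finset.sum_range_sub' (fun i => (Wnum F i : ℝ) / (Fintype.card F : ℝ) ^ i)]
  rw [htel, Wnum_zero]
  simp [Wnum]

end FinalSec

/-- The weighted Möbius sum up to degree `x` equals `-#𝒲(x)/q^x`, where `𝒲(x)` is the set
of monic polynomials of degree `x` with `Ω = 1`. -/
theorem stmt8 (x : ℕ) (hx : 0 < x) :
    ∑ᶠ A ∈ {A : Polynomial F | A.Monic ∧ 1 ≤ A.natDegree ∧ A.natDegree ≤ x},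
        (muFF A : ℝ) * (OmegaFF A : ℝ) / (Fintype.card F : ℝ) ^ A.natDegree
      = -(({B : Polynomial F | B.Monic ∧ B.natDegree = x ∧ OmegaFF B = 1}.ncard : ℝ) /
          (Fintype.card F : ℝ) ^ x) := by
  exact stmt8' x hx
end

section
/- Let q be a prime power. There is a constant C (depending only on q) such that for every positive integer x and every positive divisor d of x, the number of monic polynomials B ∈ 𝔽_q[T] with deg B = x all of whose prime factors have degree exactly d is at most C·q^x/x. -/
open Filter Topology Polynomial Asymptotics
open scoped Classical

variable {F : Type} [Field F] [Fintype F]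

set_option linter.unusedSectionVars false

open UniqueFactorizationMonoid in
private lemma factors_spec {d m : ℕ} (hd : 0 < d) (B : Polynomial F) (hB : B.Monic)
    (hdeg : B.natDegree = d * m)
    (hall : ∀ P : Polynomial F, P.Monic → Irreducible P → P ∣ B → P.natDegree = d) :
    (∀ P ∈ normalizedFactors B, P.Monic ∧ Irreducible P ∧ P.natDegree = d) ∧
      Multiset.card (normalizedFactors B) = m ∧ (normalizedFactors B).prod = B := by
  have hB0 : B ≠ 0 := hB.ne_zero
  have hmem : ∀ P ∈ normalizedFactors B, P.Monic ∧ Irreducible P ∧ P.natDegree = d := by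
    intro P hP
    have hirr : Irreducible P := irreducible_of_normalized_factor P hP
    have hmonic : P.Monic := by
      have := monic_normalize (p := P) hirr.ne_zero
      rwa [normalize_normalized_factor P hP] at this
    exact ⟨hmonic, hirr, hall P hmonic hirr (dvd_of_mem_normalizedFactors hP)⟩
  have hprodmonic : (normalizedFactors B).prod.Monic := by
    have := monic_multiset_prod_of_monic (normalizedFactors B) id
      (fun P hP => (hmem P hP).1)
    simpa using this
  have hprod : (normalizedFactors B).prod = B :=
    eq_of_monic_of_associated hprodmonic hB (prod_normalizedFactors hB0)
  have hcard : Multiset.card (normalizedFactors B) = m := by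
    have h0 : (0 : Polynomial F) ∉ normalizedFactors B := by
      intro h; exact (hmem 0 h).2.1.ne_zero rfl
    have hdeg2 : (normalizedFactors B).prod.natDegree
        = (Multiset.map Polynomial.natDegree (normalizedFactors B)).sum :=
      Polynomial.natDegree_multiset_prod _ h0
    have hrep : Multiset.map Polynomial.natDegree (normalizedFactors B)
        = Multiset.replicate (Multiset.card (normalizedFactors B)) d := by
      rw [Multiset.eq_replicate]
      constructor
      · simp
      · intro b hb
        obtain ⟨P, hP, rfl⟩ := Multiset.mem_map.mp hb
        exact (hmem P hP).2.2
    rw [hprod, hdeg, hrep, Multiset.sum_replicate, smul_eq_mul] at hdeg2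
    have := hdeg2.symm
    rw [mul_comm d m] at this
    exact Nat.eq_of_mul_eq_mul_right hd this
  exact ⟨hmem, hcard, hprod⟩

/-- Every monic irreducible polynomial of degree `e` divides `X^(q^e) - X`. -/
private lemma prime_dvd_X_pow_card (P : Polynomial F) (hm : P.Monic) (hi : Irreducible P) :
    P ∣ X ^ (Fintype.card F ^ P.natDegree) - X := by
  haveI := Fact.mk hi
  have hP0 : P ≠ 0 := hm.ne_zero
  haveI : Module.Finite F (AdjoinRoot P) := Module.Finite.of_basis (AdjoinRoot.powerBasis hP0).basis
  haveI : Finite (AdjoinRoot P) := Module.finite_of_finite F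
  haveI : Fintype (AdjoinRoot P) := Fintype.ofFinite _
  have hcard : Fintype.card (AdjoinRoot P) = Fintype.card F ^ P.natDegree := by
    rw [Module.card_eq_pow_finrank (K := F) (V := AdjoinRoot P),
      (AdjoinRoot.powerBasis hP0).finrank, AdjoinRoot.powerBasis_dim]
  rw [← AdjoinRoot.mk_eq_zero]
  have : (AdjoinRoot.root P) ^ (Fintype.card F ^ P.natDegree) = AdjoinRoot.root P := by
    rw [← hcard]; exact FiniteField.pow_card _
  rw [map_sub, map_pow, AdjoinRoot.mk_X, this, sub_self]

private lemma finite_primes (d : ℕ) :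
    {P : Polynomial F | P.Monic ∧ Irreducible P ∧ P.natDegree = d}.Finite := by
  apply Set.Finite.of_finite_image (f := fun P => fun i : Fin (d + 1) => P.coeff (i : ℕ))
    (Set.toFinite _)
  intro P hP Q hQ h
  ext n
  by_cases hn : n ≤ d
  · have := congrFun h ⟨n, Nat.lt_succ_of_le hn⟩
    simpa using this
  · push_neg at hn
    rw [Polynomial.coeff_eq_zero_of_natDegree_lt (by rw [hP.2.2]; exact hn),
      Polynomial.coeff_eq_zero_of_natDegree_lt (by rw [hQ.2.2]; exact hn)]

private lemma card_primes_mul_le (d : ℕ) (hd : 0 < d) :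
    d * (finite_primes (F := F) d).toFinset.card ≤ Fintype.card F ^ d := by
  set s := (finite_primes (F := F) d).toFinset with hs
  have hsmem : ∀ P ∈ s, P.Monic ∧ Irreducible P ∧ P.natDegree = d := by
    intro P hP; rwa [hs, Set.Finite.mem_toFinset] at hP
  have hq1 : 1 < Fintype.card F := Fintype.one_lt_card
  have hne : (X ^ (Fintype.card F ^ d) - X : Polynomial F) ≠ 0 :=
    FiniteField.X_pow_card_pow_sub_X_ne_zero _ hd.ne' hq1
  have hdvd : (∏ P ∈ s, P) ∣ (X ^ (Fintype.card F ^ d) - X : Polynomial F) := by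
    apply Finset.prod_dvd_of_coprime
    · intro P hP Q hQ hne
      obtain ⟨hPm, hPi, hPd⟩ := hsmem P hP
      obtain ⟨hQm, hQi, hQd⟩ := hsmem Q hQ
      rw [Function.onFun, Irreducible.coprime_iff_not_dvd hPi]
      intro hdvd
      exact hne (eq_of_monic_of_associated hPm hQm (hPi.associated_of_dvd hQi hdvd))
    · intro P hP
      obtain ⟨hPm, hPi, hPd⟩ := hsmem P hP
      have := prime_dvd_X_pow_card P hPm hPi
      rwa [hPd] at this
  have hdeg := Polynomial.natDegree_le_of_dvd hdvd hne
  rw [FiniteField.X_pow_card_pow_sub_X_natDegree_eq _ hd.ne' hq1] at hdeg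
  have hprod : (∏ P ∈ s, P).natDegree = s.card * d := by
    rw [Polynomial.natDegree_prod _ _ (fun P hP => (hsmem P hP).2.1.ne_zero)]
    rw [Finset.sum_congr rfl (fun P hP => (hsmem P hP).2.2), Finset.sum_const, smul_eq_mul]
  rw [hprod] at hdeg
  calc d * s.card = s.card * d := mul_comm _ _
    _ ≤ _ := hdeg

open UniqueFactorizationMonoid in
private lemma count_le_pow {d m : ℕ} (hd : 0 < d) :
    Nat.card {B : Polynomial F | B.Monic ∧ B.natDegree = d * m ∧
        ∀ P : Polynomial F, P.Monic → Irreducible P → P ∣ B → P.natDegree = d}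
      ≤ (finite_primes (F := F) d).toFinset.card ^ m := by
  set s := (finite_primes (F := F) d).toFinset with hs
  set S := {B : Polynomial F | B.Monic ∧ B.natDegree = d * m ∧
        ∀ P : Polynomial F, P.Monic → Irreducible P → P ∣ B → P.natDegree = d} with hS
  have key : ∀ B : S, ((normalizedFactors (B : Polynomial F)).toList.length = m) ∧
      ∀ P ∈ (normalizedFactors (B : Polynomial F)).toList, P ∈ s := by
    rintro ⟨B, hBm, hBd, hBall⟩
    obtain ⟨h1, h2, _⟩ := factors_spec hd B hBm hBd hBall
    refine ⟨by rw [Multiset.length_toList]; exact h2, ?_⟩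
    intro P hP
    rw [Multiset.mem_toList] at hP
    rw [hs, Set.Finite.mem_toFinset]
    exact h1 P hP
  let e : S → (Fin m → s) := fun B => fun i =>
    ⟨(normalizedFactors (B : Polynomial F)).toList.get ⟨(i : ℕ), by rw [(key B).1]; exact i.2⟩,
      (key B).2 _ (List.get_mem _ _)⟩
  have hinj : Function.Injective e := by
    intro B B' h
    have hlist : (normalizedFactors (B : Polynomial F)).toList
        = (normalizedFactors (B' : Polynomial F)).toList := by
      apply List.ext_get (by rw [(key B).1, (key B').1])
      intro n h₁ h₂
      have := congrFun h ⟨n, by rw [← (key B).1]; exact h₁⟩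
      simpa [e, Subtype.ext_iff] using this
    have hmult : normalizedFactors (B : Polynomial F) = normalizedFactors (B' : Polynomial F) := by
      rw [← Multiset.coe_toList (normalizedFactors (B : Polynomial F)), hlist,
        Multiset.coe_toList]
    obtain ⟨B, hBm, hBd, hBall⟩ := B
    obtain ⟨B', hBm', hBd', hBall'⟩ := B'
    apply Subtype.ext
    simp only at hmult ⊢
    rw [← (factors_spec hd B hBm hBd hBall).2.2, ← (factors_spec hd B' hBm' hBd' hBall').2.2,
      hmult]
  calc Nat.card S ≤ Nat.card (Fin m → s) := Nat.card_le_card_of_injective e hinj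
    _ = s.card ^ m := by
        rw [Nat.card_eq_fintype_card, Fintype.card_fun]
        simp

open UniqueFactorizationMonoid in
private lemma count_le_pow_one {x : ℕ} :
    Nat.card {B : Polynomial F | B.Monic ∧ B.natDegree = x ∧
        ∀ P : Polynomial F, P.Monic → Irreducible P → P ∣ B → P.natDegree = 1}
      ≤ (x + 1) ^ Fintype.card F := by
  set S := {B : Polynomial F | B.Monic ∧ B.natDegree = x ∧
        ∀ P : Polynomial F, P.Monic → Irreducible P → P ∣ B → P.natDegree = 1} with hS
  have hspec : ∀ B : S,
      (∀ P ∈ normalizedFactors (B : Polynomial F), P.Monic ∧ Irreducible P ∧ P.natDegree = 1) ∧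
      Multiset.card (normalizedFactors (B : Polynomial F)) = x ∧
      (normalizedFactors (B : Polynomial F)).prod = (B : Polynomial F) := by
    rintro ⟨B, hBm, hBd, hBall⟩
    exact factors_spec one_pos B hBm (by rw [one_mul]; exact hBd) hBall
  have hform : ∀ B : S, ∀ P ∈ normalizedFactors (B : Polynomial F),
      ∃ a : F, P = X - C a := by
    intro B P hP
    obtain ⟨hPm, _, hPd⟩ := (hspec B).1 P hP
    have h := hPm.eq_X_add_C hPd
    exact ⟨-P.coeff 0, by rw [map_neg, sub_neg_eq_add]; exact h⟩
  let e : S → (F → Fin (x + 1)) := fun B => fun a =>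
    ⟨Multiset.count (X - C a) (normalizedFactors (B : Polynomial F)), by
      have h1 := Multiset.count_le_card (X - C a) (normalizedFactors (B : Polynomial F))
      have h2 := (hspec B).2.1
      omega⟩
  have hinj : Function.Injective e := by
    intro B B' h
    have hmult : normalizedFactors (B : Polynomial F)
        = normalizedFactors (B' : Polynomial F) := by
      ext P
      by_cases hPf : ∃ a : F, P = X - C a
      · obtain ⟨a, rfl⟩ := hPf
        have := congrFun h a
        simpa [e, Fin.ext_iff] using this
      · rw [Multiset.count_eq_zero_of_notMem (fun hmem => hPf (hform B P hmem)),
          Multiset.count_eq_zero_of_notMem (fun hmem => hPf (hform B' P hmem))]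
    have h1 := (hspec B).2.2
    have h2 := (hspec B').2.2
    apply Subtype.ext
    rw [← h1, ← h2, hmult]
  calc Nat.card S ≤ Nat.card (F → Fin (x + 1)) := Nat.card_le_card_of_injective e hinj
    _ = (x + 1) ^ Fintype.card F := by
        rw [Nat.card_eq_fintype_card, Fintype.card_fun]
        simp

private lemma mul_le_pow_self {d m : ℕ} (hd : 2 ≤ d) (hm : 1 ≤ m) : d * m ≤ d ^ m := by
  induction m with
  | zero => omega
  | succ n ih =>
    rcases Nat.eq_zero_or_pos n with hn | hn
    · subst hn; simpa using le_refl d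
    · have h1 : d * n ≤ d ^ n := ih hn
      have h2 : d ^ (n + 1) = d ^ n * d := by ring
      have h3 : (d * n) * d ≤ d ^ n * d := Nat.mul_le_mul_right d h1
      have h5 : n + 1 ≤ n * d := by
        calc n + 1 ≤ n * 2 := by omega
          _ ≤ n * d := Nat.mul_le_mul_left n hd
      have h4 : d * (n + 1) ≤ (d * n) * d := by
        rw [mul_assoc]
        exact Nat.mul_le_mul_left d h5
      omega



/-- There is a constant `C` (depending only on `q`) such that for all `0 < d ∣ x`, the number
of monic polynomials of degree `x` all of whose prime factors have degree exactly `d` is at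
most `C q^x / x`. -/
theorem stmt10 :
    ∃ C : ℝ, ∀ x : ℕ, 0 < x → ∀ d : ℕ, 0 < d → d ∣ x →
      ({B : Polynomial F | B.Monic ∧ B.natDegree = x ∧
          ∀ P : Polynomial F, P.Monic → Irreducible P → P ∣ B → P.natDegree = d}.ncard : ℝ)
        ≤ C * (Fintype.card F : ℝ) ^ x / (x : ℝ) := by
  set q : ℕ := Fintype.card F with hq
  have hq1 : 1 < q := Fintype.one_lt_card
  have hq0 : (0 : ℝ) < (q : ℝ) := by positivity
  -- bound for the d = 1 case
  obtain ⟨C', hC'⟩ : ∃ C' : ℝ, ∀ n : ℕ, (n : ℝ) ^ (q + 1) * (1 / (q : ℝ)) ^ n ≤ C' := by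
    have hr : ‖(1 / (q : ℝ))‖ < 1 := by
      rw [Real.norm_eq_abs, abs_of_pos (by positivity)]
      rw [div_lt_one hq0]
      exact_mod_cast hq1
    have hsum := summable_pow_mul_geometric_of_norm_lt_one (R := ℝ) (q + 1) hr
    have htend := hsum.tendsto_atTop_zero
    obtain ⟨C', hC'⟩ := htend.bddAbove_range
    exact ⟨C', fun n => hC' ⟨n, rfl⟩⟩
  have hC'0 : 0 ≤ C' := le_trans (by norm_num) (hC' 0)
  refine ⟨max 1 ((2 : ℝ) ^ (q + 1) * C'), ?_⟩
  intro x hx d hd hdvd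
  obtain ⟨m, rfl⟩ := hdvd
  have hm : 0 < m := Nat.pos_of_ne_zero fun h => by simp [h] at hx
  set S := {B : Polynomial F | B.Monic ∧ B.natDegree = d * m ∧
      ∀ P : Polynomial F, P.Monic → Irreducible P → P ∣ B → P.natDegree = d} with hSdef
  have hkey : (S.ncard : ℝ) * ((d * m : ℕ) : ℝ) ≤ max 1 ((2 : ℝ) ^ (q + 1) * C') * (q : ℝ) ^ (d * m) := by
    have hncard : S.ncard = Nat.card S := (Nat.card_coe_set_eq S).symm
    rcases Nat.lt_or_ge d 2 with hd2 | hd2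
    · -- d = 1
      have hd1 : d = 1 := by omega
      subst hd1
      have hcount : Nat.card S ≤ (1 * m + 1) ^ q := count_le_pow_one
      have hb : (Nat.card S : ℝ) * ((1 * m : ℕ) : ℝ) ≤ (2 : ℝ) ^ (q + 1) * C' * (q : ℝ) ^ (1 * m) := by
        have h1 : (Nat.card S : ℝ) ≤ ((m + 1 : ℕ) : ℝ) ^ q := by
          exact_mod_cast (by simpa using hcount)
        have hm1 : ((m + 1 : ℕ) : ℝ) ≤ 2 * (m : ℝ) := by
          push_cast; nlinarith [(Nat.one_le_cast (α := ℝ)).mpr hm]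
        have h2 : ((m + 1 : ℕ) : ℝ) ^ q ≤ (2 * (m : ℝ)) ^ q := by
          exact pow_le_pow_left₀ (by positivity) hm1 q
        have h3 : (m : ℝ) ^ (q + 1) ≤ C' * (q : ℝ) ^ m := by
          have := hC' m
          rw [div_pow, one_pow] at this
          calc (m : ℝ) ^ (q + 1) = (m : ℝ) ^ (q + 1) * (1 / (q : ℝ) ^ m) * (q : ℝ) ^ m := by
                field_simp
            _ ≤ C' * (q : ℝ) ^ m := by
                exact mul_le_mul_of_nonneg_right this (by positivity)
        calc (Nat.card S : ℝ) * ((1 * m : ℕ) : ℝ)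
            = (Nat.card S : ℝ) * (m : ℝ) := by norm_num
          _ ≤ ((m + 1 : ℕ) : ℝ) ^ q * (m : ℝ) :=
              mul_le_mul_of_nonneg_right h1 (by positivity)
          _ ≤ (2 * (m : ℝ)) ^ q * (m : ℝ) := by
              apply mul_le_mul_of_nonneg_right h2 (by positivity)
          _ = (2 : ℝ) ^ q * (m : ℝ) ^ (q + 1) := by ring
          _ ≤ (2 : ℝ) ^ q * (C' * (q : ℝ) ^ m) := by
              apply mul_le_mul_of_nonneg_left h3 (by positivity)
          _ ≤ (2 : ℝ) ^ (q + 1) * C' * (q : ℝ) ^ (1 * m) := by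
              rw [one_mul]
              have h5 : (2 : ℝ) ^ q ≤ (2 : ℝ) ^ (q + 1) := by
                apply pow_le_pow_right₀ (by norm_num) (by omega)
              calc (2 : ℝ) ^ q * (C' * (q : ℝ) ^ m)
                  ≤ (2 : ℝ) ^ (q + 1) * (C' * (q : ℝ) ^ m) :=
                    mul_le_mul_of_nonneg_right h5 (mul_nonneg hC'0 (by positivity))
                _ = (2 : ℝ) ^ (q + 1) * C' * (q : ℝ) ^ m := by ring
      rw [hncard]
      calc (Nat.card S : ℝ) * ((1 * m : ℕ) : ℝ) ≤ (2 : ℝ) ^ (q + 1) * C' * (q : ℝ) ^ (1 * m) := hb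
        _ ≤ max 1 ((2 : ℝ) ^ (q + 1) * C') * (q : ℝ) ^ (1 * m) := by
            apply mul_le_mul_of_nonneg_right (le_max_right _ _) (by positivity)
    · -- d ≥ 2
      set N := (finite_primes (F := F) d).toFinset.card with hN
      have h1 : Nat.card S ≤ N ^ m := count_le_pow hd
      have h2 : d * N ≤ q ^ d := card_primes_mul_le d hd
      have h3 : Nat.card S * (d * m) ≤ q ^ (d * m) := by
        calc Nat.card S * (d * m) ≤ N ^ m * (d * m) := Nat.mul_le_mul_right _ h1
          _ ≤ N ^ m * d ^ m := Nat.mul_le_mul_left _ (mul_le_pow_self hd2 hm)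
          _ = (d * N) ^ m := by rw [mul_pow]; ring
          _ ≤ (q ^ d) ^ m := Nat.pow_le_pow_left h2 m
          _ = q ^ (d * m) := by rw [← pow_mul]
      rw [hncard]
      calc (Nat.card S : ℝ) * ((d * m : ℕ) : ℝ) = ((Nat.card S * (d * m) : ℕ) : ℝ) := by push_cast; ring
        _ ≤ ((q ^ (d * m) : ℕ) : ℝ) := by exact_mod_cast h3
        _ = (q : ℝ) ^ (d * m) := by push_cast; ring
        _ ≤ max 1 ((2 : ℝ) ^ (q + 1) * C') * (q : ℝ) ^ (d * m) := by
            nlinarith [pow_pos hq0 (d * m), le_max_left (1 : ℝ) ((2 : ℝ) ^ (q + 1) * C')]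
  have hx0 : (0 : ℝ) < ((d * m : ℕ) : ℝ) := by exact_mod_cast hx
  rw [le_div_iff₀ hx0]
  exact hkey
end
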